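/- arXiv:1906.06354 — 2 statements merged into one kernel-verified Lean document; each statement's English description precedes it below -/
import Mathlib

section
/- Let n ≥ 0, 0 ≤ k ≤ n+1, and r ≥ 0. The pullback map Φ^* restricts to a linear isomorphism from P_rΛ^k(ℝ^{n+1}) onto P_{2r+k}Λ^k_e(ℝ^{n+1}), the space of even forms in P_{2r+k}Λ^k(ℝ^{n+1}). -/
open scoped BigOperators
open MeasureTheory

noncomputable section

/-- Vectors in `ℝ^m`. -/
abbrev Vec (m : ℕ) := Fin m → ℝ

/-- Differential `k`-forms on `ℝ^m`, given pointwise as alternating `k`-tensors. -/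
abbrev Form (m k : ℕ) := Vec m → (Vec m [⋀^Fin k]→ₗ[ℝ] ℝ)

/-- A multivariate polynomial has (total) degree at most `r : ℤ`. -/
def degLE {m : ℕ} (r : ℤ) (p : MvPolynomial (Fin m) ℝ) : Prop :=
  ∀ d ∈ p.support, ((d.sum fun _ e => e : ℕ) : ℤ) ≤ r

/-- `P_rΛ^k(ℝ^m)`: differential `k`-forms with polynomial coefficients of degree at most `r`. -/
def PL (m k : ℕ) (r : ℤ) : Set (Form m k) :=
  {α | ∀ v : Fin k → Vec m, ∃ p : MvPolynomial (Fin m) ℝ,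
      degLE r p ∧ ∀ x, α x v = MvPolynomial.eval x p}

/-- Interior product with the radial vector field `X = Σ xᵢ ∂/∂xᵢ`. -/
def iU {m k : ℕ} (β : Form m (k + 1)) : Form m k := fun x => (β x).curryLeft x

/-- `P_r⁻Λ^k(ℝ^m) := i_X P_{r-1}Λ^{k+1}(ℝ^m)`. -/
def PLm (m k : ℕ) (r : ℤ) : Set (Form m k) := iU '' PL m (k + 1) (r - 1)

/-- The reflection negating the `i`-th coordinate, as a map. -/
def reflFun (m : ℕ) (i : Fin m) (u : Vec m) : Vec m := fun j => if j = i then -u j else u j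

/-- The reflection negating the `i`-th coordinate, as a linear map. -/
def reflLin (m : ℕ) (i : Fin m) : Vec m →ₗ[ℝ] Vec m :=
  LinearMap.pi fun j => if j = i then -LinearMap.proj j else LinearMap.proj j

/-- Pullback of an ambient form along the reflection `R_i`. -/
def reflPull (m k : ℕ) (i : Fin m) (α : Form m k) : Form m k :=
  fun x => (α (reflFun m i x)).compLinearMap (reflLin m i)

/-- A form on `ℝ^m` is even if it is invariant under all coordinate reflections. -/
def IsEven (m k : ℕ) (α : Form m k) : Prop := ∀ i, reflPull m k i α = α

/-- A form on `ℝ^m` is odd if every coordinate reflection negates it. -/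
def IsOdd (m k : ℕ) (α : Form m k) : Prop := ∀ i, reflPull m k i α = -α

/-- The map `Φ(u) = (u₁², …, u_m²)`. -/
def Phi (m : ℕ) (u : Vec m) : Vec m := fun i => u i ^ 2

/-- The differential of `Φ` at `u`. -/
def dPhi (m : ℕ) (u : Vec m) : Vec m →ₗ[ℝ] Vec m :=
  LinearMap.pi fun i => (2 * u i) • LinearMap.proj i

/-- Pullback of ambient forms along `Φ`. -/
def phiPull (m k : ℕ) (α : Form m k) : Form m k :=
  fun u => (α (Phi m u)).compLinearMap (dPhi m u)

/-- The standard simplex `T^{m-1} ⊂ ℝ^m`. -/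
def simplexSet (m : ℕ) : Set (Vec m) := {x | (∀ i, 0 ≤ x i) ∧ ∑ i, x i = 1}

/-- The unit sphere `S^{m-1} ⊂ ℝ^m`. -/
def sphereSet (m : ℕ) : Set (Vec m) := {u | ∑ i, u i ^ 2 = 1}

/-- The linear functional `v ↦ ⟨u, v⟩`. -/
def dotLin (m : ℕ) (u : Vec m) : Vec m →ₗ[ℝ] ℝ := ∑ i, u i • LinearMap.proj i

/-- Orthogonal projection onto the tangent space of the sphere at `u`. -/
def projSph (m : ℕ) (u : Vec m) : Vec m →ₗ[ℝ] Vec m :=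
  LinearMap.id - (dotLin m u).smulRight u

/-- The linear functional `v ↦ Σ vᵢ`. -/
def sumLin (m : ℕ) : Vec m →ₗ[ℝ] ℝ := ∑ i, LinearMap.proj i

/-- Orthogonal projection onto the tangent hyperplane `{Σ vᵢ = 0}` of the simplex. -/
def projSim (m : ℕ) : Vec m →ₗ[ℝ] Vec m :=
  LinearMap.id - ((m : ℝ)⁻¹ • sumLin m).smulRight (fun _ => 1)

/-- Differential `k`-forms on a subset `M ⊆ ℝ^m`, encoded at each point by the canonical
alternating tensor on `ℝ^m` that vanishes in the directions normal to `M` (i.e. the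
pullback along the inclusion, extended by the tangent projection). -/
abbrev FormOn (m : ℕ) (M : Set (Vec m)) (k : ℕ) := M → (Vec m [⋀^Fin k]→ₗ[ℝ] ℝ)

/-- Restriction (pullback along the inclusion) of an ambient form to the simplex. -/
def resSim (m k : ℕ) (α : Form m k) : FormOn m (simplexSet m) k :=
  fun x => (α x.1).compLinearMap (projSim m)

/-- Restriction (pullback along the inclusion) of an ambient form to the sphere. -/
def resSph (m k : ℕ) (α : Form m k) : FormOn m (sphereSet m) k :=
  fun u => (α u.1).compLinearMap (projSph m u.1)

/-- `P_rΛ^k(T^{m-1})`. -/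
def PLsim (m k : ℕ) (r : ℤ) : Set (FormOn m (simplexSet m) k) := resSim m k '' PL m k r

/-- `P_rΛ^k(S^{m-1})`. -/
def PLsph (m k : ℕ) (r : ℤ) : Set (FormOn m (sphereSet m) k) := resSph m k '' PL m k r

/-- `P_r⁻Λ^k(T^{m-1})`. -/
def PLmsim (m k : ℕ) (r : ℤ) : Set (FormOn m (simplexSet m) k) := resSim m k '' PLm m k r

/-- `P_r⁻Λ^k(S^{m-1})`. -/
def PLmsph (m k : ℕ) (r : ℤ) : Set (FormOn m (sphereSet m) k) := resSph m k '' PLm m k r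

lemma phi_mem_simplex {m : ℕ} {u : Vec m} (hu : u ∈ sphereSet m) :
    Phi m u ∈ simplexSet m :=
  ⟨fun _ => sq_nonneg _, hu⟩

/-- Pullback `Φ^* : Λ^k(T^{m-1}) → Λ^k(S^{m-1})` along `Φ : S^{m-1} → T^{m-1}`. -/
def phiPullTS (m k : ℕ) (a : FormOn m (simplexSet m) k) : FormOn m (sphereSet m) k :=
  fun u => (a ⟨Phi m u.1, phi_mem_simplex u.2⟩).compLinearMap
    ((dPhi m u.1).comp (projSph m u.1))

lemma refl_mem_sphere {m : ℕ} {i : Fin m} {u : Vec m} (hu : u ∈ sphereSet m) :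
    reflFun m i u ∈ sphereSet m := by
  have : ∀ j, (reflFun m i u j) ^ 2 = u j ^ 2 := by
    intro j; simp only [reflFun]; split <;> ring
  simpa only [sphereSet, Set.mem_setOf_eq, this] using hu

/-- Pullback of a form on the sphere along the reflection `R_i`. -/
def reflPullSph (m k : ℕ) (i : Fin m) (α : FormOn m (sphereSet m) k) :
    FormOn m (sphereSet m) k :=
  fun u => (α ⟨reflFun m i u.1, refl_mem_sphere u.2⟩).compLinearMap (reflLin m i)

/-- A form on the sphere is even if it is invariant under all coordinate reflections. -/
def IsEvenSph (m k : ℕ) (α : FormOn m (sphereSet m) k) : Prop :=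
  ∀ i, reflPullSph m k i α = α

/-- A form on the sphere is odd if every coordinate reflection negates it. -/
def IsOddSph (m k : ℕ) (α : FormOn m (sphereSet m) k) : Prop :=
  ∀ i, reflPullSph m k i α = -α

/-- The bubble function `u_N = u₁ ⋯ u_m`. -/
def bubble (m : ℕ) (u : Vec m) : ℝ := ∏ i, u i

/-- Multiplication of a form on the sphere by the bubble function. -/
def bubbleSmul (m k : ℕ) (α : FormOn m (sphereSet m) k) : FormOn m (sphereSet m) k :=
  fun u => bubble m u.1 • α u

/-- Multiplication of an ambient form by the bubble function. -/
def bubbleSmulAmb (m k : ℕ) (α : Form m k) : Form m k :=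
  fun u => bubble m u • α u

/-- The standard volume form on `ℝ^m`. -/
def volForm (m : ℕ) : (Vec m) [⋀^Fin m]→ₗ[ℝ] ℝ := (Pi.basisFun ℝ (Fin m)).det

/-- Iterated interior product: insert the vectors `v 0, …, v (k-1)` into the
first `k` slots of an alternating `(k+j)`-tensor. -/
def contrMany {m : ℕ} : (k : ℕ) → (Fin k → Vec m) → {j : ℕ} →
    ((Vec m) [⋀^Fin (k + j)]→ₗ[ℝ] ℝ) → ((Vec m) [⋀^Fin j]→ₗ[ℝ] ℝ)
  | 0, _, j, α => α.domDomCongr (finCongr (Nat.zero_add j))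
  | (k + 1), v, j, α =>
      contrMany k (fun i => v i.succ)
        ((α.domDomCongr (finCongr (by omega : (k + 1) + j = (k + j) + 1))).curryLeft (v 0))

/-- The Hodge star on alternating tensors on `ℝ^m` (standard metric and orientation):
`(⋆α)(w₁,…,w_{m-k}) = (1/k!) Σ_g α(e_{g 0},…,e_{g(k-1)}) vol(e_{g 0},…,e_{g(k-1)},w₁,…,w_{m-k})`. -/
def starAlt (m k : ℕ) (α : (Vec m) [⋀^Fin k]→ₗ[ℝ] ℝ) : (Vec m) [⋀^Fin (m - k)]→ₗ[ℝ] ℝ :=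
  if h : k ≤ m then
    (k.factorial : ℝ)⁻¹ •
      ∑ g : Fin k → Fin m,
        α (fun i => Pi.single (g i) 1) •
          contrMany k (fun i => Pi.single (g i) 1)
            ((volForm m).domDomCongr (finCongr (by omega : m = k + (m - k))))
  else 0

/-- The Hodge star `⋆_{ℝ^m}` applied pointwise to ambient forms. -/
def starR (m k : ℕ) (α : Form m k) : Form m (m - k) := fun x => starAlt m k (α x)

/-- The wedge product of alternating tensors. -/
def wedgeAlt {m k l : ℕ} (α : (Vec m) [⋀^Fin k]→ₗ[ℝ] ℝ) (β : (Vec m) [⋀^Fin l]→ₗ[ℝ] ℝ) :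
    (Vec m) [⋀^Fin (k + l)]→ₗ[ℝ] ℝ :=
  ((TensorProduct.lid ℝ ℝ).toLinearMap.compAlternatingMap (α.domCoprod β)).domDomCongr
    finSumFinEquiv

/-- The conormal `ν = Σ uᵢ duᵢ` at `u`, as an alternating 1-tensor. -/
def nuForm (m : ℕ) (u : Vec m) : (Vec m) [⋀^Fin 1]→ₗ[ℝ] ℝ :=
  AlternatingMap.ofSubsingleton ℝ (Vec m) ℝ (0 : Fin 1) (dotLin m u)

/-- The extended Hodge star `⋆_{S^{m-1}} α := ⋆_{ℝ^m}(ν ∧ α)` on ambient forms. -/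
def starSphAmb (m k : ℕ) (α : Form m k) : Form m (m - (1 + k)) :=
  fun x => starAlt m (1 + k) (wedgeAlt (nuForm m x) (α x))

/-- The Hodge star of a form on the sphere (w.r.t. the round metric and the orientation
induced by the outward normal), computed as the restriction of `⋆_{ℝ^m}(ν ∧ ·)`. -/
def starSph (m k : ℕ) (α : FormOn m (sphereSet m) k) :
    FormOn m (sphereSet m) (m - (1 + k)) :=
  fun u => (starAlt m (1 + k) (wedgeAlt (nuForm m u.1) (α u))).compLinearMap (projSph m u.1)

/-- Re-indexing a form along an equality of form degrees. -/
def castForm {m k l : ℕ} (h : k = l) (α : Form m k) : Form m l :=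
  fun x => (α x).domDomCongr (finCongr h)

/-- Re-indexing a form on a subset along an equality of form degrees. -/
def castFormOn {m : ℕ} {M : Set (Vec m)} {k l : ℕ} (h : k = l) (α : FormOn m M k) :
    FormOn m M l :=
  fun x => (α x).domDomCongr (finCongr h)

/-- Trace on the boundary of the simplex vanishes: at every boundary point (a point of some
face `xᵢ = 0`), the form vanishes on vectors tangent to that face. -/
def vanishBdry (m k : ℕ) (a : FormOn m (simplexSet m) k) : Prop :=
  ∀ (x : simplexSet m) (i : Fin m), x.1 i = 0 →
    ∀ v : Fin k → Vec m, (∀ j, (∑ l, v j l) = 0 ∧ v j i = 0) → a x v = 0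

/-- `P̊_rΛ^k(T^{m-1})`: forms in `P_rΛ^k(T^{m-1})` with vanishing trace on the boundary. -/
def PLosim (m k : ℕ) (r : ℤ) : Set (FormOn m (simplexSet m) k) :=
  {a ∈ PLsim m k r | vanishBdry m k a}

/-- `P̊_r⁻Λ^k(T^{m-1})`. -/
def PLmosim (m k : ℕ) (r : ℤ) : Set (FormOn m (simplexSet m) k) :=
  {a ∈ PLmsim m k r | vanishBdry m k a}

/-- A form on the sphere vanishes (as an alternating tensor on the tangent space)
at every point of `S^{m-1} ∩ Γ`, where `Γ = ∪ᵢ {uᵢ = 0}`. -/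
def zeroOnGammaSph (m k : ℕ) (α : FormOn m (sphereSet m) k) : Prop :=
  ∀ u : sphereSet m, (∃ i, u.1 i = 0) →
    ∀ v : Fin k → Vec m, (∀ j, ∑ l, u.1 l * v j l = 0) → α u v = 0

/-- An ambient form vanishes (as an alternating tensor) at every point of `Γ`. -/
def zeroOnGammaAmb (m k : ℕ) (α : Form m k) : Prop :=
  ∀ u : Vec m, (∃ i, u i = 0) → α u = 0

/-- The wedge product of forms on a subset. -/
def wedgeOn {m : ℕ} {M : Set (Vec m)} {k l : ℕ} (a : FormOn m M k) (b : FormOn m M l) :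
    FormOn m M (k + l) :=
  fun x => wedgeAlt (a x) (b x)

/-- The base region of the parametrization of the simplex. -/
def baseSimplex (n : ℕ) : Set (Fin n → ℝ) := {y | (∀ j, 0 ≤ y j) ∧ ∑ j, y j ≤ 1}

/-- Parametrization `y ↦ (1 - Σy, y)` of `T^n` over the base region. -/
def simplexParam (n : ℕ) (y : Fin n → ℝ) : Vec (n + 1) := Fin.cons (1 - ∑ j, y j) y

lemma simplexParam_mem {n : ℕ} {y : Fin n → ℝ} (h : y ∈ baseSimplex n) :
    simplexParam n y ∈ simplexSet (n + 1) := by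
  constructor
  · intro i
    refine Fin.cases ?_ ?_ i
    · simpa [simplexParam] using sub_nonneg.mpr h.2
    · intro j; simpa [simplexParam] using h.1 j
  · simp [simplexParam, Fin.sum_cons]

/-- The coordinate tangent vectors `∂x/∂y_j = e_{j+1} - e_0` of the parametrization,
a positively oriented frame for the orientation of `T^n` induced from the outward-normal
orientation of `S^n` via `Φ`. -/
def simplexTangent (n : ℕ) (j : Fin n) : Vec (n + 1) :=
  Fin.cons (-1) (Pi.single j 1)

open Classical in
/-- The integral of an `n`-form over the oriented simplex `T^n`. -/
def integralSimplex (n : ℕ) (ω : FormOn (n + 1) (simplexSet (n + 1)) n) : ℝ :=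
  ∫ y : Fin n → ℝ,
    if h : y ∈ baseSimplex n then ω ⟨simplexParam n y, simplexParam_mem h⟩ (simplexTangent n)
    else 0

/-- Forms on a subset that genuinely are pullbacks to the simplex: they vanish in the
normal directions (canonical representatives). -/
def TangentialSim (m k : ℕ) (a : FormOn m (simplexSet m) k) : Prop :=
  ∀ x, (a x).compLinearMap (projSim m) = a x

/-- Continuity of a form on a subset. -/
def ContFormOn (m : ℕ) (M : Set (Vec m)) (k : ℕ) (a : FormOn m M k) : Prop :=
  ∀ v : Fin k → Vec m, Continuous fun x : M => a x v

/-- The Riemannian volume form of the round sphere `S^{m-1}` (outward-normal orientation),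
i.e. the restriction of `⋆_{ℝ^m} ν`. -/
def volSph (m : ℕ) : FormOn m (sphereSet m) (m - 1) :=
  fun u => (starAlt m 1 (nuForm m u.1)).compLinearMap (projSph m u.1)


namespace S6
open MvPolynomial

variable {m k : ℕ}

noncomputable def eTup (g : Fin k → Fin m) : Fin k → Vec m := fun j => Pi.single (g j) 1

lemma alt_expand (ω : (Vec m) [⋀^Fin k]→ₗ[ℝ] ℝ) (v : Fin k → Vec m) :
    ω v = ∑ g : Fin k → Fin m, (∏ j, v j (g j)) * ω (eTup g) := by
  have hv : (fun j => v j) = fun j => ∑ i : Fin m, v j i • (Pi.single i 1 : Vec m) := by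
    funext j l
    simp [Finset.sum_apply, Pi.single_apply, mul_ite]
  calc ω v = ω (fun j => ∑ i : Fin m, v j i • (Pi.single i 1 : Vec m)) := by
        conv_lhs => rw [show v = fun j => v j from rfl, hv]
    _ = ∑ g : Fin k → Fin m, ω (fun j => v j (g j) • (Pi.single (g j) 1 : Vec m)) := by
        exact ω.toMultilinearMap.map_sum (fun j i => v j i • (Pi.single i 1 : Vec m))
    _ = ∑ g : Fin k → Fin m, (∏ j, v j (g j)) * ω (eTup g) := by
        refine Finset.sum_congr rfl fun g _ => ?_
        have := ω.toMultilinearMap.map_smul_univ (fun j => v j (g j)) (eTup g)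
        simpa [eTup, smul_eq_mul] using this

noncomputable def dxAlt (g : Fin k → Fin m) : (Vec m) [⋀^Fin k]→ₗ[ℝ] ℝ :=
  (Matrix.detRowAlternating : (Fin k → ℝ) [⋀^Fin k]→ₗ[ℝ] ℝ).compLinearMap
    (LinearMap.funLeft ℝ ℝ g)

lemma dxAlt_apply (g : Fin k → Fin m) (v : Fin k → Vec m) :
    dxAlt g v = (Matrix.of fun j j' => v j (g j')).det := rfl

lemma alt_sum_apply {ι : Type*} (s : Finset ι) (f : ι → (Vec m) [⋀^Fin k]→ₗ[ℝ] ℝ)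
    (v : Fin k → Vec m) : (s.sum f) v = s.sum fun t => f t v := by
  induction s using Finset.cons_induction with
  | empty => simp
  | cons a s ha ih => rw [Finset.sum_cons, Finset.sum_cons, AlternatingMap.add_apply, ih]

lemma recon (ω : (Vec m) [⋀^Fin k]→ₗ[ℝ] ℝ) (v : Fin k → Vec m) :
    ∑ g : Fin k → Fin m, ω (eTup g) * dxAlt g v = (k.factorial : ℝ) * ω v := by
  have hdx : ∀ g : Fin k → Fin m,
      dxAlt g v = ∑ τ : Equiv.Perm (Fin k), (Equiv.Perm.sign τ : ℤ) * ∏ j, v (τ j) (g j) := by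
    intro g; rw [dxAlt_apply, Matrix.det_apply]
    refine Finset.sum_congr rfl fun τ _ => ?_
    rw [Units.smul_def, zsmul_eq_mul]
    rfl
  calc ∑ g : Fin k → Fin m, ω (eTup g) * dxAlt g v
      = ∑ τ : Equiv.Perm (Fin k), ∑ g : Fin k → Fin m,
          ω (eTup g) * ((Equiv.Perm.sign τ : ℤ) * ∏ j, v (τ j) (g j)) := by
        simp_rw [hdx, Finset.mul_sum]; exact Finset.sum_comm
    _ = ∑ τ : Equiv.Perm (Fin k), ∑ g : Fin k → Fin m, ω (eTup g) * ∏ j, v j (g j) := by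
        refine Finset.sum_congr rfl fun τ _ => ?_
        have hbij : Function.Bijective (fun g : Fin k → Fin m => g ∘ τ) := by
          constructor
          · intro g₁ g₂ h
            funext j
            have := congrFun h (τ.symm j); simpa using this
          · intro g; exact ⟨g ∘ τ.symm, by funext j; simp⟩
        rw [← Function.Bijective.sum_comp hbij
          (fun g => ω (eTup g) * ((Equiv.Perm.sign τ : ℤ) * ∏ j, v (τ j) (g j)))]
        refine Finset.sum_congr rfl fun g _ => ?_
        have h1 : eTup (g ∘ τ) = (eTup g) ∘ τ := rfl
        have h2 : ω ((eTup g) ∘ τ) = Equiv.Perm.sign τ • ω (eTup g) :=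
          ω.map_perm (eTup g) τ
        have h3 : (∏ j, v (τ j) ((g ∘ τ) j)) = ∏ j, v j (g j) :=
          Equiv.prod_comp τ (fun j => v j (g j))
        rw [h1, h2, h3, Units.smul_def, zsmul_eq_mul]
        rcases Int.units_eq_one_or (Equiv.Perm.sign τ) with h | h <;> rw [h] <;> push_cast <;> ring
    _ = (k.factorial : ℝ) * ω v := by
        rw [Finset.sum_const, Finset.card_univ, Fintype.card_perm, Fintype.card_fin]
        rw [alt_expand ω v, Finset.mul_sum, nsmul_eq_mul, Finset.mul_sum]
        congr 1; funext g; ring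

lemma degLE_iff {r : ℤ} {p : MvPolynomial (Fin m) ℝ} :
    degLE r p ↔ ∀ d ∈ p.support, ((∑ i, d i : ℕ) : ℤ) ≤ r := by
  unfold degLE
  refine forall₂_congr fun d _ => ?_
  rw [Finsupp.sum_fintype _ _ fun _ => rfl]

lemma coeff_msum_ne {ι : Type*} (s : Finset ι) (E : ι → (Fin m →₀ ℕ)) (c : ι → ℝ) {d}
    (h : coeff d (s.sum fun t => monomial (E t) (c t)) ≠ 0) : ∃ t ∈ s, d = E t := by
  by_contra hc
  push_neg at hc
  apply h
  rw [coeff_sum]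
  refine Finset.sum_eq_zero fun t ht => ?_
  rw [coeff_monomial, if_neg fun he => hc t ht he.symm]

lemma eval_monomial' (u : Vec m) (e : Fin m →₀ ℕ) (c : ℝ) :
    eval u (monomial e c) = c * ∏ i, u i ^ e i := by
  rw [eval_monomial, Finsupp.prod_fintype]
  intro i; exact pow_zero _

noncomputable def chi (g : Fin k → Fin m) : Fin m →₀ ℕ := ∑ j, Finsupp.single (g j) 1

lemma prod_chi (g : Fin k → Fin m) (u : Vec m) :
    ∏ i, u i ^ (chi g i) = ∏ j, u (g j) := by
  have h1 : ∀ i, u i ^ (chi g i) = ∏ j, u i ^ (Finsupp.single (g j) 1 i) := by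
    intro i
    rw [chi, Finsupp.finset_sum_apply, Finset.prod_pow_eq_pow_sum]
  simp_rw [h1]
  rw [Finset.prod_comm]
  refine Finset.prod_congr rfl fun j _ => ?_
  rw [Finset.prod_eq_single (g j)]
  · simp
  · intro i _ hi; rw [Finsupp.single_apply, if_neg (fun h => hi h.symm), pow_zero]
  · simp

lemma sum_chi (g : Fin k → Fin m) : ∑ i, chi g i = k := by
  simp only [chi, Finsupp.finset_sum_apply]
  rw [Finset.sum_comm]
  have : ∀ j : Fin k, ∑ i, Finsupp.single (g j) 1 i = 1 := by
    intro j
    rw [Finset.sum_eq_single (g j)]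
    · simp
    · intro i _ hi; rw [Finsupp.single_apply, if_neg (fun h => hi h.symm)]
    · simp
  simp [this]

lemma chi_inj {g : Fin k → Fin m} (hg : Function.Injective g) (i : Fin m) :
    chi g i = if i ∈ Set.range g then 1 else 0 := by
  rw [chi, Finsupp.finset_sum_apply]
  by_cases h : i ∈ Set.range g
  · obtain ⟨j₀, hj₀⟩ := h
    rw [if_pos ⟨j₀, hj₀⟩, Finset.sum_eq_single j₀]
    · simp [hj₀]
    · intro j _ hj
      rw [Finsupp.single_apply, if_neg]
      intro he; exact hj (hg (by rw [he, hj₀]))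
    · simp
  · rw [if_neg h]
    refine Finset.sum_eq_zero fun j _ => ?_
    rw [Finsupp.single_apply, if_neg fun he => h ⟨j, he⟩]

noncomputable def sqP (p : MvPolynomial (Fin m) ℝ) : MvPolynomial (Fin m) ℝ :=
  p.support.sum fun d => monomial (2 • d) (coeff d p)

lemma eval_sqP (u : Vec m) (p : MvPolynomial (Fin m) ℝ) :
    eval u (sqP p) = eval (Phi m u) p := by
  rw [sqP, map_sum, eval_eq']
  refine Finset.sum_congr rfl fun d _ => ?_
  rw [eval_monomial']
  congr 1
  refine Finset.prod_congr rfl fun i _ => ?_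
  rw [Finsupp.smul_apply, smul_eq_mul, pow_mul]
  rfl

lemma two_smul_inj {a b : Fin m →₀ ℕ} (h : 2 • a = 2 • b) : a = b := by
  ext i
  have := DFunLike.congr_fun h i
  simp only [Finsupp.smul_apply, smul_eq_mul] at this
  omega

lemma coeff_sqP (d : Fin m →₀ ℕ) (p : MvPolynomial (Fin m) ℝ) :
    coeff (2 • d) (sqP p) = coeff d p := by
  rw [sqP, coeff_sum]
  have h1 : ∀ d' ∈ p.support, coeff (2 • d) (monomial (2 • d') (coeff d' p))
      = if d' = d then coeff d' p else 0 := by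
    intro d' _
    rw [coeff_monomial]
    congr 1
    simp only [eq_iff_iff]
    exact ⟨fun h => two_smul_inj h, fun h => by rw [h]⟩
  rw [Finset.sum_congr rfl h1, Finset.sum_ite_eq' p.support d (fun d' => coeff d' p)]
  split
  · rfl
  · next h => exact (notMem_support_iff.mp h).symm

noncomputable def negP (i : Fin m) (p : MvPolynomial (Fin m) ℝ) : MvPolynomial (Fin m) ℝ :=
  p.support.sum fun d => monomial d ((-1 : ℝ) ^ (d i) * coeff d p)

lemma eval_negP (i : Fin m) (u : Vec m) (p : MvPolynomial (Fin m) ℝ) :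
    eval (reflFun m i u) p = eval u (negP i p) := by
  rw [negP, map_sum, eval_eq']
  refine Finset.sum_congr rfl fun d _ => ?_
  rw [eval_monomial']
  have h1 : ∀ l, (reflFun m i u l) ^ (d l)
      = (if l = i then (-1 : ℝ) ^ (d l) else 1) * (u l) ^ (d l) := by
    intro l
    by_cases h : l = i
    · rw [if_pos h]
      have : reflFun m i u l = -u l := by simp [reflFun, h]
      rw [this, neg_pow]
    · rw [if_neg h, one_mul]
      have : reflFun m i u l = u l := by simp [reflFun, h]
      rw [this]
  simp_rw [h1]
  rw [Finset.prod_mul_distrib, Finset.prod_ite_eq' Finset.univ i (fun l => (-1 : ℝ) ^ (d l))]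
  simp
  ring

lemma coeff_negP (i : Fin m) (d : Fin m →₀ ℕ) (p : MvPolynomial (Fin m) ℝ) :
    coeff d (negP i p) = (-1 : ℝ) ^ (d i) * coeff d p := by
  rw [negP, coeff_sum]
  have h1 : ∀ d' ∈ p.support, coeff d (monomial d' ((-1 : ℝ) ^ (d' i) * coeff d' p))
      = if d' = d then (-1 : ℝ) ^ (d' i) * coeff d' p else 0 := fun d' _ => coeff_monomial _ _ _
  rw [Finset.sum_congr rfl h1, Finset.sum_ite_eq' p.support d]
  split
  · rfl
  · next h => rw [notMem_support_iff.mp h, mul_zero]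

lemma parity_of_sign (i : Fin m) (p : MvPolynomial (Fin m) ℝ) (s : ℝ)
    (h : ∀ u, eval (reflFun m i u) p = s * eval u p) :
    ∀ d ∈ p.support, (-1 : ℝ) ^ (d i) = s := by
  have hpq : negP i p = C s * p := by
    apply MvPolynomial.funext
    intro u
    rw [← eval_negP, h u, eval_mul, eval_C]
  intro d hd
  have := congrArg (coeff d) hpq
  rw [coeff_negP, coeff_C_mul] at this
  exact mul_right_cancel₀ (mem_support_iff.mp hd) this

noncomputable def halfn (e : Fin m →₀ ℕ) : Fin m →₀ ℕ := e.mapRange (· / 2) (Nat.zero_div 2)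

noncomputable def reconQ (g : Fin k → Fin m) (p : MvPolynomial (Fin m) ℝ) :
    MvPolynomial (Fin m) ℝ :=
  p.support.sum fun d => monomial (halfn (d - chi g)) (coeff d p)

section
variable {g : Fin k → Fin m} {p : MvPolynomial (Fin m) ℝ}
  (hchi1 : ∀ i, chi g i ≤ 1)
  (hpar : ∀ d ∈ p.support, ∀ i, d i % 2 = chi g i % 2)

include hchi1 hpar in
lemma recon_key : ∀ d ∈ p.support, ∀ i, d i = chi g i + 2 * (halfn (d - chi g) i) := by
  intro d hd i
  have h1 := hpar d hd i
  have h2 := hchi1 i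
  rw [halfn, Finsupp.mapRange_apply, Finsupp.tsub_apply]
  omega

include hchi1 hpar in
lemma recon_eval (u : Vec m) :
    eval u p = (∏ j, u (g j)) * eval (Phi m u) (reconQ g p) := by
  have hkey := recon_key hchi1 hpar
  rw [eval_eq' u p, reconQ, map_sum, Finset.mul_sum]
  refine Finset.sum_congr rfl fun d hd => ?_
  rw [eval_monomial', ← prod_chi g u]
  have h1 : ∀ i ∈ Finset.univ,
      u i ^ d i = u i ^ chi g i * (Phi m u i) ^ (halfn (d - chi g) i) := by
    intro i _
    rw [show Phi m u i = u i ^ 2 from rfl, ← pow_mul, ← pow_add, ← hkey d hd i]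
  rw [Finset.prod_congr rfl h1, Finset.prod_mul_distrib]
  ring

include hchi1 hpar in
lemma recon_deg {R : ℕ} (hdeg : ∀ d ∈ p.support, ∑ i, d i ≤ 2 * R + k) :
    ∀ d' ∈ (reconQ g p).support, ∑ i, d' i ≤ R := by
  intro d' hd'
  obtain ⟨d, hd, rfl⟩ := coeff_msum_ne _ _ _ (mem_support_iff.mp hd')
  have hkey := recon_key hchi1 hpar d hd
  have hsum : ∑ i, d i = (∑ i, chi g i) + 2 * ∑ i, halfn (d - chi g) i := by
    rw [Finset.mul_sum, ← Finset.sum_add_distrib]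
    exact Finset.sum_congr rfl fun i _ => hkey i
  rw [sum_chi] at hsum
  have := hdeg d hd
  omega

end

end S6

namespace S6
open MvPolynomial

variable {m k : ℕ}

lemma reflLin_apply (i : Fin m) (w : Vec m) (j : Fin m) :
    reflLin m i w j = if j = i then -w j else w j := by
  rw [reflLin, LinearMap.pi_apply]
  split
  · rfl
  · rfl

lemma dPhi_apply (u w : Vec m) (i : Fin m) : dPhi m u w i = 2 * u i * w i := by
  rw [dPhi, LinearMap.pi_apply, LinearMap.smul_apply, LinearMap.proj_apply, smul_eq_mul]

lemma reflLin_single (i l : Fin m) :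
    reflLin m i (Pi.single l (1 : ℝ)) = (if l = i then (-1 : ℝ) else 1) • (Pi.single l 1 : Vec m) := by
  funext j
  rw [reflLin_apply, Pi.smul_apply]
  by_cases hl : l = i
  · subst hl
    by_cases hj : j = l
    · subst hj; simp
    · simp [hj, Pi.single_apply]
  · rw [if_neg hl, one_smul]
    by_cases hj : j = i
    · subst hj
      rw [if_pos rfl, Pi.single_apply, if_neg (by exact fun h => hl h.symm)]
      simp
    · rw [if_neg hj]

lemma phi_reflFun (i : Fin m) (x : Vec m) : Phi m (reflFun m i x) = Phi m x := by
  funext l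
  show (reflFun m i x l) ^ 2 = x l ^ 2
  rw [reflFun]
  split <;> ring

lemma even_parity {β : Form m k} (hev : IsEven m k β) {g : Fin k → Fin m}
    (hg : Function.Injective g) {p : MvPolynomial (Fin m) ℝ}
    (hp : ∀ x, β x (eTup g) = eval x p) (i : Fin m) :
    ∀ d ∈ p.support, d i % 2 = chi g i % 2 := by
  classical
  set s : ℝ := if i ∈ Set.range g then -1 else 1 with hs
  have hs2 : s * s = 1 := by rw [hs]; split <;> norm_num
  have hmain : ∀ x, eval (reflFun m i x) p = s * eval x p := by
    intro x
    have h0 := congrFun (hev i) x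
    have h1 : (β (reflFun m i x)).compLinearMap (reflLin m i) (eTup g) = β x (eTup g) :=
      congrArg (fun ω : (Vec m) [⋀^Fin k]→ₗ[ℝ] ℝ => ω (eTup g)) h0
    rw [AlternatingMap.compLinearMap_apply] at h1
    have h2 : (fun j => reflLin m i (eTup g j))
        = fun j => (if g j = i then (-1 : ℝ) else 1) • eTup g j := by
      funext j
      exact reflLin_single i (g j)
    rw [h2] at h1
    have h3 := MultilinearMap.map_smul_univ (β (reflFun m i x)).toMultilinearMap
      (fun j => if g j = i then (-1 : ℝ) else 1) (eTup g)
    have h3' : β (reflFun m i x) (fun j => (if g j = i then (-1 : ℝ) else 1) • eTup g j)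
        = (∏ j, if g j = i then (-1 : ℝ) else 1) • β (reflFun m i x) (eTup g) := h3
    have h4 : (∏ j, if g j = i then (-1 : ℝ) else 1) = s := by
      rw [hs]
      by_cases hr : i ∈ Set.range g
      · obtain ⟨j₀, hj₀⟩ := hr
        rw [if_pos ⟨j₀, hj₀⟩, Finset.prod_eq_single j₀]
        · rw [if_pos hj₀]
        · intro j _ hj
          rw [if_neg]
          intro he
          exact hj (hg (by rw [he, hj₀]))
        · simp
      · rw [if_neg hr]
        refine Finset.prod_eq_one fun j _ => ?_
        rw [if_neg fun he => hr ⟨j, he⟩]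
    rw [h3', h4, smul_eq_mul] at h1
    -- h1 : s * β (reflFun m i x) (eTup g) = β x (eTup g)
    have h5 : s * (s * β (reflFun m i x) (eTup g)) = s * β x (eTup g) := by rw [h1]
    rw [← mul_assoc, hs2, one_mul] at h5
    rw [hp, hp] at h5
    exact h5
  have hsgn := parity_of_sign i p s hmain
  intro d hd
  have h6 := hsgn d hd
  have h7 : chi g i = if i ∈ Set.range g then 1 else 0 := chi_inj hg i
  by_cases hr : i ∈ Set.range g
  · have h8 : chi g i = 1 := by rw [h7, if_pos hr]
    have h9 : (-1 : ℝ) ^ (d i) = -1 := by rw [h6, hs, if_pos hr]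
    rcases Nat.even_or_odd (d i) with he | ho
    · exfalso
      rw [he.neg_one_pow] at h9
      norm_num at h9
    · rw [Nat.odd_iff] at ho
      omega
  · have h8 : chi g i = 0 := by rw [h7, if_neg hr]
    have h9 : (-1 : ℝ) ^ (d i) = 1 := by rw [h6, hs, if_neg hr]
    rcases Nat.even_or_odd (d i) with he | ho
    · rw [Nat.even_iff] at he
      omega
    · exfalso
      rw [ho.neg_one_pow] at h9
      norm_num at h9

end S6

namespace S6
open MvPolynomial

variable {m k : ℕ}

lemma phiPull_apply (a : Form m k) (x : Vec m) (v : Fin k → Vec m) :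
    phiPull m k a x v = a (Phi m x) (fun j => dPhi m x (v j)) := rfl

lemma phiPull_mapsTo (r : ℕ) : Set.MapsTo (phiPull m k) (PL m k (r : ℤ))
    {α ∈ PL m k (2 * (r : ℤ) + k) | IsEven m k α} := by
  classical
  intro a ha
  refine ⟨?_, ?_⟩
  · -- membership in PL (2r+k)
    intro v
    choose P hdeg hev using fun g : Fin k → Fin m => ha (eTup g)
    refine ⟨∑ g : Fin k → Fin m, (P g).support.sum
        (fun d => monomial (chi g + 2 • d) ((∏ j, 2 * v j (g j)) * coeff d (P g))), ?_, ?_⟩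
    · rw [degLE_iff]
      intro d hd
      have h0 := mem_support_iff.mp hd
      rw [coeff_sum] at h0
      obtain ⟨g, _, hg0⟩ := Finset.exists_ne_zero_of_sum_ne_zero h0
      obtain ⟨d', hd', rfl⟩ := coeff_msum_ne _ _ _ hg0
      have hsum : ∑ i, (chi g + 2 • d') i = k + 2 * ∑ i, d' i := by
        have h1 : ∀ i ∈ Finset.univ, (chi g + 2 • d') i = chi g i + 2 * d' i := by
          intro i _
          rw [Finsupp.add_apply, Finsupp.smul_apply, smul_eq_mul]
        rw [Finset.sum_congr rfl h1, Finset.sum_add_distrib, sum_chi, ← Finset.mul_sum]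
      have h2 : ((∑ i, d' i : ℕ) : ℤ) ≤ (r : ℤ) := degLE_iff.mp (hdeg g) d' hd'
      have h3 : (∑ i, d' i) ≤ r := by exact_mod_cast h2
      rw [hsum]
      omega
    · intro x
      have hL : phiPull m k a x v = ∑ g : Fin k → Fin m,
          (∏ j, (dPhi m x (v j)) (g j)) * eval (Phi m x) (P g) := by
        rw [phiPull_apply, alt_expand (a (Phi m x)) (fun j => dPhi m x (v j))]
        exact Finset.sum_congr rfl fun g _ => by rw [hev g (Phi m x)]
      rw [hL, map_sum]
      refine Finset.sum_congr rfl fun g _ => ?_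
      rw [map_sum]
      have hR : ∀ d ∈ (P g).support,
          eval x (monomial (chi g + 2 • d) ((∏ j, 2 * v j (g j)) * coeff d (P g)))
          = ((∏ j, 2 * v j (g j)) * (∏ j, x (g j)))
              * (coeff d (P g) * ∏ i, (Phi m x) i ^ d i) := by
        intro d _
        rw [eval_monomial']
        have h1 : ∀ i ∈ Finset.univ,
            x i ^ (chi g + 2 • d) i = x i ^ chi g i * (Phi m x) i ^ d i := by
          intro i _
          rw [Finsupp.add_apply, Finsupp.smul_apply, smul_eq_mul, pow_add,
            show (Phi m x) i = x i ^ 2 from rfl, ← pow_mul]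
        have h2 : ∏ i, x i ^ (chi g + 2 • d) i
            = (∏ j, x (g j)) * ∏ i, (Phi m x) i ^ d i := by
          rw [Finset.prod_congr rfl h1, Finset.prod_mul_distrib, prod_chi]
        rw [h2]
        ring
      rw [Finset.sum_congr rfl hR, ← Finset.mul_sum, ← eval_eq']
      have h4 : (∏ j, (dPhi m x (v j)) (g j)) = (∏ j, 2 * v j (g j)) * ∏ j, x (g j) := by
        rw [← Finset.prod_mul_distrib]
        refine Finset.prod_congr rfl fun j _ => ?_
        rw [dPhi_apply]; ring
      rw [h4]
  · -- evenness
    intro i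
    funext x
    show (phiPull m k a (reflFun m i x)).compLinearMap (reflLin m i) = phiPull m k a x
    ext v
    rw [AlternatingMap.compLinearMap_apply, phiPull_apply, phiPull_apply, phi_reflFun]
    congr 1
    funext j
    funext l
    rw [dPhi_apply, dPhi_apply, reflLin_apply]
    have : reflFun m i x l = if l = i then -x l else x l := rfl
    rw [this]
    by_cases h : l = i
    · rw [if_pos h, if_pos h]; ring
    · rw [if_neg h, if_neg h]

lemma phiPull_injOn (r : ℕ) : Set.InjOn (phiPull m k) (PL m k (r : ℤ)) := by
  intro a ha b hb hab
  funext x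
  ext v
  obtain ⟨p, _, hpe⟩ := ha v
  obtain ⟨q, _, hqe⟩ := hb v
  suffices hpq : p = q by rw [hpe, hqe, hpq]
  have hzero : (∏ i : Fin m, (X i : MvPolynomial (Fin m) ℝ)) * (sqP p - sqP q) = 0 := by
    apply MvPolynomial.funext
    intro u
    rw [map_zero, map_mul, map_sub, eval_sqP, eval_sqP, map_prod]
    simp only [eval_X]
    by_cases hu : ∀ i, u i ≠ 0
    · have h1 : a (Phi m u) v = b (Phi m u) v := by
        have h0 := congrFun hab u
        have h2 : phiPull m k a u (fun j l => v j l / (2 * u l))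
            = phiPull m k b u (fun j l => v j l / (2 * u l)) := by rw [h0]
        rw [phiPull_apply, phiPull_apply] at h2
        have h3 : (fun j => dPhi m u (fun l => v j l / (2 * u l))) = v := by
          funext j l
          rw [dPhi_apply]
          have h5 : (2 : ℝ) * u l ≠ 0 := mul_ne_zero two_ne_zero (hu l)
          field_simp
          exact mul_div_cancel_left₀ (v j l) (hu l)
        rwa [h3] at h2
      rw [← hpe (Phi m u), ← hqe (Phi m u), h1, sub_self, mul_zero]
    · push_neg at hu
      obtain ⟨i, hi⟩ := hu
      rw [Finset.prod_eq_zero (Finset.mem_univ i) hi, zero_mul]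
  have hne : (∏ i : Fin m, (X i : MvPolynomial (Fin m) ℝ)) ≠ 0 :=
    Finset.prod_ne_zero_iff.mpr fun i _ => X_ne_zero i
  have hsq : sqP p = sqP q :=
    sub_eq_zero.mp ((mul_eq_zero.mp hzero).resolve_left hne)
  apply MvPolynomial.ext
  intro d
  rw [← coeff_sqP d p, ← coeff_sqP d q, hsq]

lemma phiPull_surjOn (r : ℕ) : Set.SurjOn (phiPull m k) (PL m k (r : ℤ))
    {α ∈ PL m k (2 * (r : ℤ) + k) | IsEven m k α} := by
  classical
  intro β hβ
  obtain ⟨hβPL, hβev⟩ := hβ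
  choose P hdeg hev using fun g : Fin k → Fin m => hβPL (eTup g)
  set c : ℝ := ((2 : ℝ) ^ k * k.factorial)⁻¹ with hc
  set Q : (Fin k → Fin m) → MvPolynomial (Fin m) ℝ :=
    fun g => if Function.Injective g then reconQ g (P g) else 0 with hQdef
  have hchi1 : ∀ g : Fin k → Fin m, Function.Injective g → ∀ i, chi g i ≤ 1 := by
    intro g hg i
    rw [chi_inj hg]
    split <;> omega
  have hpar : ∀ g : Fin k → Fin m, Function.Injective g →
      ∀ d ∈ (P g).support, ∀ i, d i % 2 = chi g i % 2 := by
    intro g hg d hd i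
    exact even_parity hβev hg (fun x => hev g x) i d hd
  have hQkey : ∀ g : Fin k → Fin m, ∀ u : Vec m,
      (∏ j, u (g j)) * eval (Phi m u) (Q g) = β u (eTup g) := by
    intro g u
    by_cases hg : Function.Injective g
    · simp only [hQdef, if_pos hg]
      rw [← recon_eval (hchi1 g hg) (hpar g hg) u, hev]
    · simp only [hQdef, if_neg hg]
      rw [map_zero, mul_zero]
      obtain ⟨j, j', he, hne⟩ := Function.not_injective_iff.mp hg
      refine ((β u).map_eq_zero_of_eq (eTup g) ?_ hne).symm
      show (Pi.single (g j) 1 : Vec m) = Pi.single (g j') 1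
      rw [he]
  have hQdeg : ∀ g : Fin k → Fin m, ∀ d' ∈ (Q g).support, ∑ i, d' i ≤ r := by
    intro g d' hd'
    by_cases hg : Function.Injective g
    · simp only [hQdef, if_pos hg] at hd'
      refine recon_deg (hchi1 g hg) (hpar g hg) ?_ d' hd'
      intro d hd
      have h2 := degLE_iff.mp (hdeg g) d hd
      have h3 : ((2 * r + k : ℕ) : ℤ) = 2 * (r : ℤ) + k := by push_cast; ring
      rw [← h3] at h2
      exact_mod_cast h2
    · simp only [hQdef, if_neg hg] at hd'
      simp at hd'
  set α : Form m k := fun x => ∑ g : Fin k → Fin m, (c * eval x (Q g)) • dxAlt g with hα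
  have hαapp : ∀ (x : Vec m) (v : Fin k → Vec m),
      α x v = ∑ g : Fin k → Fin m, (c * eval x (Q g)) * dxAlt g v := by
    intro x v
    rw [hα]
    rw [alt_sum_apply]
    exact Finset.sum_congr rfl fun g _ => by rw [AlternatingMap.smul_apply, smul_eq_mul]
  refine ⟨α, ?_, ?_⟩
  · -- α ∈ PL r
    intro v
    refine ⟨∑ g : Fin k → Fin m, C (c * dxAlt g v) * Q g, ?_, ?_⟩
    · rw [degLE_iff]
      intro d hd
      have h0 := mem_support_iff.mp hd
      rw [coeff_sum] at h0
      obtain ⟨g, _, hg0⟩ := Finset.exists_ne_zero_of_sum_ne_zero h0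
      rw [coeff_C_mul] at hg0
      have h1 := hQdeg g d (mem_support_iff.mpr (right_ne_zero_of_mul hg0))
      exact_mod_cast h1
    · intro x
      rw [hαapp, map_sum]
      refine Finset.sum_congr rfl fun g _ => ?_
      rw [map_mul, eval_C]
      ring
  · -- phiPull α = β
    funext u
    ext v
    rw [phiPull_apply, hαapp]
    have hdet : ∀ g : Fin k → Fin m, dxAlt g (fun j => dPhi m u (v j))
        = ((2 : ℝ) ^ k * ∏ j, u (g j)) * dxAlt g v := by
      intro g
      rw [dxAlt_apply, dxAlt_apply]
      have hM : (Matrix.of fun j j' => (dPhi m u (v j)) (g j'))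
          = Matrix.of fun j j' => (2 * u (g j')) * (Matrix.of fun a b => v a (g b)) j j' := by
        ext j j'
        rw [Matrix.of_apply, Matrix.of_apply, dPhi_apply, Matrix.of_apply]
      rw [hM]
      calc (Matrix.of fun j j' =>
              (2 * u (g j')) * (Matrix.of fun a b => v a (g b)) j j').det
          = (∏ j', 2 * u (g j')) * (Matrix.of fun a b => v a (g b)).det :=
            Matrix.det_mul_row _ _
        _ = ((2 : ℝ) ^ k * ∏ j, u (g j)) * (Matrix.of fun a b => v a (g b)).det := by
            rw [Finset.prod_mul_distrib, Finset.prod_const, Finset.card_univ,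
              Fintype.card_fin]
    calc ∑ g : Fin k → Fin m, (c * eval (Phi m u) (Q g)) * dxAlt g (fun j => dPhi m u (v j))
        = ∑ g : Fin k → Fin m,
            (c * (2 : ℝ) ^ k) * (((∏ j, u (g j)) * eval (Phi m u) (Q g)) * dxAlt g v) := by
          refine Finset.sum_congr rfl fun g _ => ?_
          rw [hdet g]; ring
      _ = (c * (2 : ℝ) ^ k) * ∑ g : Fin k → Fin m, β u (eTup g) * dxAlt g v := by
          rw [Finset.mul_sum]
          exact Finset.sum_congr rfl fun g _ => by rw [hQkey g u]
      _ = (c * (2 : ℝ) ^ k) * ((k.factorial : ℝ) * β u v) := by rw [recon]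
      _ = β u v := by
          have h2 : (2 : ℝ) ^ k ≠ 0 := pow_ne_zero _ two_ne_zero
          have hf : (k.factorial : ℝ) ≠ 0 := Nat.cast_ne_zero.mpr k.factorial_ne_zero
          rw [hc]
          field_simp

end S6

theorem stmt6 (n k r : ℕ) (hk : k ≤ n + 1) :
    Set.BijOn (phiPull (n + 1) k) (PL (n + 1) k (r : ℤ))
      {α ∈ PL (n + 1) k (2 * (r : ℤ) + k) | IsEven (n + 1) k α} ∧
    (∀ a b, phiPull (n + 1) k (a + b) = phiPull (n + 1) k a + phiPull (n + 1) k b) ∧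
    (∀ (c : ℝ) a, phiPull (n + 1) k (c • a) = c • phiPull (n + 1) k a) := by
  refine ⟨⟨S6.phiPull_mapsTo r, S6.phiPull_injOn r, S6.phiPull_surjOn r⟩, ?_, ?_⟩
  · intro a b
    funext u
    ext v
    simp [phiPull, AlternatingMap.compLinearMap_apply, Pi.add_apply,
      AlternatingMap.add_apply]
  · intro c a
    funext u
    ext v
    simp [phiPull, AlternatingMap.compLinearMap_apply, Pi.smul_apply,
      AlternatingMap.smul_apply]

end
end

section
/- Let n ≥ 0, 0 ≤ k ≤ n+1, and r ≥ 1. The pullback map Φ^* restricts to a linear isomorphism from P_r^-Λ^k(ℝ^{n+1}) onto P_{2r+k}^-Λ^k_e(ℝ^{n+1}), the space of even forms in P_{2r+k}^-Λ^k(ℝ^{n+1}). -/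
open scoped BigOperators
open MeasureTheory

noncomputable section

section Toolkit
open MvPolynomial
variable {m : ℕ}



lemma dsum_eq (d : Fin m →₀ ℕ) : (d.sum fun _ e => e) = ∑ i, d i :=
  Finsupp.sum_fintype _ _ (fun _ => rfl)

lemma degLE_iff {r : ℤ} {p : MvPolynomial (Fin m) ℝ} :
    degLE r p ↔ ∀ d ∈ p.support, ((∑ i, d i : ℕ) : ℤ) ≤ r := by
  unfold degLE; simp_rw [dsum_eq]

lemma degLE_zero {r : ℤ} (hr : 0 ≤ r) : degLE r (0 : MvPolynomial (Fin m) ℝ) := by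
  intro d hd; simp at hd

lemma degLE_monomial {r : ℤ} {d : Fin m →₀ ℕ} {c : ℝ} (h : ((∑ i, d i : ℕ) : ℤ) ≤ r) :
    degLE r (monomial d c) := by
  rw [degLE_iff]
  intro e he
  have := MvPolynomial.support_monomial_subset he
  simp at this
  subst this; exact h

lemma degLE_sum {r : ℤ} {ι : Type*} {s : Finset ι} {f : ι → MvPolynomial (Fin m) ℝ}
    (h : ∀ a ∈ s, degLE r (f a)) : degLE r (∑ a ∈ s, f a) := by
  classical
  intro d hd
  obtain ⟨a, ha, hda⟩ := Finset.mem_biUnion.1 (MvPolynomial.support_sum hd)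
  exact h a ha d hda

lemma degLE_mul {r t : ℤ} {p q : MvPolynomial (Fin m) ℝ} (hp : degLE r p) (hq : degLE t q) :
    degLE (r + t) (p * q) := by
  classical
  rw [degLE_iff] at *
  intro d hd
  obtain ⟨d1, hd1, d2, hd2, rfl⟩ := Finset.mem_add.1 (MvPolynomial.support_mul p q hd)
  have : ∑ i, (d1 + d2) i = (∑ i, d1 i) + ∑ i, d2 i := by
    simp [Finset.sum_add_distrib]
  rw [this]
  have := add_le_add (hp d1 hd1) (hq d2 hd2)
  push_cast at this ⊢
  convert this using 2 <;> simp

lemma degLE_C_mul {r : ℤ} {c : ℝ} {p : MvPolynomial (Fin m) ℝ} (hp : degLE r p) :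
    degLE r (C c * p) := by
  intro d hd
  rw [← MvPolynomial.smul_eq_C_mul] at hd
  exact hp d (Finsupp.support_smul hd)

lemma degLE_neg {r : ℤ} {p : MvPolynomial (Fin m) ℝ} (hp : degLE r p) : degLE r (-p) := by
  intro d hd; exact hp d (by simpa using hd)

lemma degLE_X {i : Fin m} : degLE 1 (X i : MvPolynomial (Fin m) ℝ) := by
  rw [degLE_iff]
  intro d hd
  rw [MvPolynomial.support_X, Finset.mem_singleton] at hd
  subst hd
  simp [Finsupp.single_apply]

lemma degLE_mono {r r' : ℤ} (h : r ≤ r') {p : MvPolynomial (Fin m) ℝ} (hp : degLE r p) :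
    degLE r' p := fun d hd => (hp d hd).trans h

lemma degLE_one : degLE 0 (1 : MvPolynomial (Fin m) ℝ) := by
  rw [degLE_iff]
  intro d hd
  rw [show (1 : MvPolynomial (Fin m) ℝ) = monomial 0 1 by simp] at hd
  have := MvPolynomial.support_monomial_subset hd
  simp at this
  subst this; simp

lemma degLE_prod {ι : Type*} (s : Finset ι) (f : ι → MvPolynomial (Fin m) ℝ) (b : ι → ℤ)
    (h : ∀ a ∈ s, degLE (b a) (f a)) : degLE (∑ a ∈ s, b a) (∏ a ∈ s, f a) := by
  classical
  induction s using Finset.cons_induction with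
  | empty => simpa using degLE_one
  | cons a s ha ih =>
      rw [Finset.prod_cons, Finset.sum_cons]
      exact degLE_mul (h a (Finset.mem_cons_self a s)) (ih fun x hx => h x (Finset.mem_cons_of_mem hx))

lemma degLE_prod_X {k : ℕ} (g : Fin k → Fin m) :
    degLE (k : ℤ) (∏ i, (X (g i) : MvPolynomial (Fin m) ℝ)) := by
  have := degLE_prod Finset.univ (fun i => (X (g i) : MvPolynomial (Fin m) ℝ)) (fun _ => 1)
    (fun a _ => degLE_X)
  simpa using this

/-! ### sqPoly -/

noncomputable def sqPoly (p : MvPolynomial (Fin m) ℝ) : MvPolynomial (Fin m) ℝ :=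
  ∑ d ∈ p.support, monomial (2 • d) (coeff d p)

lemma eval_sqPoly (p : MvPolynomial (Fin m) ℝ) (x : Fin m → ℝ) :
    eval x (sqPoly p) = eval (fun i => x i ^ 2) p := by
  rw [eval_eq' (fun i => x i ^ 2) p, sqPoly, map_sum]
  refine Finset.sum_congr rfl fun d _ => ?_
  rw [eval_monomial]
  congr 1
  rw [Finsupp.prod_fintype _ _ (fun i => pow_zero (x i))]
  refine Finset.prod_congr rfl fun i _ => ?_
  rw [Finsupp.smul_apply, smul_eq_mul, pow_mul]

lemma coeff_sqPoly (p : MvPolynomial (Fin m) ℝ) (e : Fin m →₀ ℕ) :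
    coeff (2 • e) (sqPoly p) = coeff e p := by
  classical
  rw [sqPoly, coeff_sum]
  have h2 : ∀ d : Fin m →₀ ℕ, 2 • d = 2 • e ↔ d = e := by
    intro d
    constructor
    · intro h
      ext i
      have := DFunLike.congr_fun h i
      simp only [Finsupp.smul_apply, smul_eq_mul] at this
      omega
    · rintro rfl; rfl
  by_cases he : e ∈ p.support
  · rw [Finset.sum_eq_single e]
    · simp [coeff_monomial]
    · intro d _ hd
      rw [coeff_monomial, if_neg]
      intro h; exact hd ((h2 d).1 h)
    · intro h; exact absurd he h
  · rw [MvPolynomial.notMem_support_iff.1 he, Finset.sum_eq_zero]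
    intro d hd
    rw [coeff_monomial, if_neg]
    intro h
    exact he ((h2 d).1 h ▸ hd)

lemma sqPoly_inj {p q : MvPolynomial (Fin m) ℝ} (h : sqPoly p = sqPoly q) : p = q := by
  ext e
  rw [← coeff_sqPoly p e, ← coeff_sqPoly q e, h]

lemma degLE_sqPoly {s : ℤ} {p : MvPolynomial (Fin m) ℝ} (hp : degLE s p) :
    degLE (2 * s) (sqPoly p) := by
  classical
  refine degLE_sum fun d hd => ?_
  refine degLE_monomial ?_
  have : ∑ i, (2 • d) i = 2 * ∑ i, d i := by
    rw [Finset.mul_sum]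
    exact Finset.sum_congr rfl fun i _ => by simp
  rw [this]
  have := (degLE_iff.1 hp) d hd
  push_cast at this ⊢
  linarith

/-! ### flipPoly -/

noncomputable def flipPoly (i : Fin m) (p : MvPolynomial (Fin m) ℝ) : MvPolynomial (Fin m) ℝ :=
  ∑ d ∈ p.support, monomial d ((-1) ^ (d i) * coeff d p)

lemma eval_flipPoly (i : Fin m) (p : MvPolynomial (Fin m) ℝ) (x : Fin m → ℝ) :
    eval x (flipPoly i p) = eval (reflFun m i x) p := by
  rw [eval_eq' (reflFun m i x) p, flipPoly, map_sum]
  refine Finset.sum_congr rfl fun d _ => ?_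
  rw [eval_monomial]
  have : ∀ j, (reflFun m i x j) ^ (d j) = (if j = i then (-1:ℝ) ^ (d j) else 1) * x j ^ d j := by
    intro j
    unfold reflFun
    split
    · rw [neg_pow]
    · ring
  calc (-1:ℝ) ^ (d i) * coeff d p * (d.prod fun j e => x j ^ e)
      = coeff d p * ((-1:ℝ) ^ (d i) * ∏ j, x j ^ d j) := by
        rw [Finsupp.prod_fintype _ _ (fun j => pow_zero (x j))]; ring
    _ = coeff d p * ∏ j, reflFun m i x j ^ d j := by
        congr 1
        rw [Finset.prod_congr rfl (fun j _ => this j), Finset.prod_mul_distrib]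
        congr 1
        rw [Finset.prod_ite_eq' Finset.univ i (fun j => (-1:ℝ) ^ (d j))]
        simp

lemma coeff_flipPoly (i : Fin m) (p : MvPolynomial (Fin m) ℝ) (e : Fin m →₀ ℕ) :
    coeff e (flipPoly i p) = (-1) ^ (e i) * coeff e p := by
  classical
  rw [flipPoly, coeff_sum]
  by_cases he : e ∈ p.support
  · rw [Finset.sum_eq_single e]
    · simp [coeff_monomial]
    · intro d _ hd
      rw [coeff_monomial, if_neg (by exact fun h => hd h)]
    · intro h; exact absurd he h
  · rw [Finset.sum_eq_zero, MvPolynomial.notMem_support_iff.1 he, mul_zero]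
    intro d hd
    rw [coeff_monomial, if_neg]
    rintro rfl; exact he hd

/-! ### halfPoly -/

noncomputable def dHalf (d : Fin m →₀ ℕ) : Fin m →₀ ℕ := Finsupp.mapRange (· / 2) (by norm_num) d

lemma dHalf_apply (d : Fin m →₀ ℕ) (i : Fin m) : dHalf d i = d i / 2 :=
  Finsupp.mapRange_apply

noncomputable def halfPoly (p : MvPolynomial (Fin m) ℝ) : MvPolynomial (Fin m) ℝ :=
  ∑ d ∈ p.support, monomial (dHalf d) (coeff d p)

lemma halfPoly_neg (p : MvPolynomial (Fin m) ℝ) : halfPoly (-p) = - halfPoly p := by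
  unfold halfPoly
  rw [MvPolynomial.support_neg, ← Finset.sum_neg_distrib]
  refine Finset.sum_congr rfl fun d _ => ?_
  rw [coeff_neg, map_neg]

lemma halfPoly_zero : halfPoly (0 : MvPolynomial (Fin m) ℝ) = 0 := by
  unfold halfPoly; simp

lemma pow_split {x : ℝ} {e : ℕ} (S : Finset (Fin m)) (i : Fin m)
    (h : if i ∈ S then Odd e else Even e) :
    x ^ e = (if i ∈ S then x else 1) * (x ^ 2) ^ (e / 2) := by
  split_ifs with hi
  · rw [if_pos hi] at h
    obtain ⟨c, hc⟩ := h
    have : e / 2 = c := by omega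
    rw [this, hc, ← pow_mul]
    rw [show 2 * c + 1 = c * 2 + 1 from by ring, pow_succ]
    ring
  · rw [if_neg hi] at h
    obtain ⟨c, hc⟩ := h
    have : e / 2 = c := by omega
    rw [this, hc, ← pow_mul]
    congr 1
    ring

lemma eval_halfPoly {p : MvPolynomial (Fin m) ℝ} (S : Finset (Fin m))
    (hpar : ∀ d ∈ p.support, ∀ i, if i ∈ S then Odd (d i) else Even (d i))
    (x : Fin m → ℝ) :
    eval x p = (∏ i ∈ S, x i) * eval (fun i => x i ^ 2) (halfPoly p) := by
  rw [eval_eq' x p, halfPoly, map_sum, Finset.mul_sum]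
  refine Finset.sum_congr rfl fun d hd => ?_
  rw [eval_monomial]
  rw [Finsupp.prod_fintype _ _ (fun j => pow_zero _)]
  have key : ∏ i, x i ^ d i = (∏ i ∈ S, x i) * ∏ i, (x i ^ 2) ^ (dHalf d i) := by
    have : ∀ i : Fin m, x i ^ d i = (if i ∈ S then x i else 1) * (x i ^ 2) ^ (dHalf d i) := by
      intro i
      rw [dHalf_apply]
      exact pow_split S i (hpar d hd i)
    rw [Finset.prod_congr rfl (fun i _ => this i), Finset.prod_mul_distrib]
    congr 1
    rw [Finset.prod_ite_mem Finset.univ S x, Finset.univ_inter]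
  rw [key]
  simp only [dHalf_apply]
  ring

lemma degLE_halfPoly {t : ℤ} {j : ℕ} {p : MvPolynomial (Fin m) ℝ} (S : Finset (Fin m))
    (hcard : S.card = j)
    (hpar : ∀ d ∈ p.support, ∀ i, if i ∈ S then Odd (d i) else Even (d i))
    (hp : degLE (2 * t + j) p) : degLE t (halfPoly p) := by
  refine degLE_sum fun d hd => ?_
  refine degLE_monomial ?_
  have hsplit : ∑ i, d i = 2 * (∑ i, dHalf d i) + j := by
    have : ∀ i : Fin m, d i = 2 * (dHalf d i) + (if i ∈ S then 1 else 0) := by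
      intro i
      have := hpar d hd i
      rw [dHalf_apply]
      split_ifs with hi
      · rw [if_pos hi] at this; obtain ⟨c, hc⟩ := this; omega
      · rw [if_neg hi] at this; obtain ⟨c, hc⟩ := this; omega
    rw [Finset.sum_congr rfl (fun i _ => this i), Finset.sum_add_distrib, ← Finset.mul_sum]
    congr 1
    rw [Finset.sum_ite_mem Finset.univ S (fun _ => 1), Finset.univ_inter, ← hcard]
    simp
  have hle := (degLE_iff.1 hp) d hd
  rw [hsplit] at hle
  push_cast at hle ⊢
  linarith

end Toolkit


section AltTool
variable {m : ℕ}

lemma alt_expand {k : ℕ} (f : (Vec m) [⋀^Fin k]→ₗ[ℝ] ℝ) (v : Fin k → Vec m) :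
    f v = ∑ g : Fin k → Fin m, (∏ i, v i (g i)) • f (fun i => Pi.single (g i) 1) := by
  have hv : ∀ i, v i = ∑ j : Fin m, v i j • (Pi.single j 1 : Vec m) := by
    intro i; funext l
    simp [Pi.single_apply, Finset.sum_ite_eq']
  have h1 : f v = f.toMultilinearMap (fun i => ∑ j : Fin m, v i j • (Pi.single j 1 : Vec m)) := by
    rw [show (fun i => ∑ j : Fin m, v i j • (Pi.single j 1 : Vec m)) = v from
      funext (fun i => (hv i).symm)]
    rfl
  rw [h1, f.toMultilinearMap.map_sum]
  refine Finset.sum_congr rfl fun g _ => ?_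
  exact f.toMultilinearMap.map_smul_univ (fun i => v i (g i)) (fun i => Pi.single (g i) 1)

def basisML (m : ℕ) {j : ℕ} (h : Fin j → Fin m) : MultilinearMap ℝ (fun _ : Fin j => Vec m) ℝ :=
  (MultilinearMap.mkPiAlgebra ℝ (Fin j) ℝ).compLinearMap (fun i => LinearMap.proj (h i))

lemma basisML_apply {j : ℕ} (h : Fin j → Fin m) (v : Fin j → Vec m) :
    basisML m h v = ∏ i, v i (h i) := by
  simp [basisML]

def mkAlt (m j : ℕ) (c : (Fin j → Fin m) → ℝ)
    (hsw : ∀ (h : Fin j → Fin m) (a b : Fin j), a ≠ b → c (h ∘ Equiv.swap a b) = - c h) :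
    (Vec m) [⋀^Fin j]→ₗ[ℝ] ℝ where
  toMultilinearMap := ∑ h : Fin j → Fin m, c h • basisML m h
  map_eq_zero_of_eq' := by
    intro v a b hvab hab
    change (∑ h : Fin j → Fin m, c h • basisML m h) v = 0
    rw [MultilinearMap.sum_apply]
    have happ : ∀ h : Fin j → Fin m, (c h • basisML m h) v = c h * ∏ i, v i (h i) := by
      intro h; rw [MultilinearMap.smul_apply, basisML_apply, smul_eq_mul]
    rw [Finset.sum_congr rfl (fun h _ => happ h)]
    have hv' : ∀ i, v (Equiv.swap a b i) = v i := by
      intro i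
      rcases eq_or_ne i a with rfl | hia
      · rw [Equiv.swap_apply_left]; exact hvab.symm
      rcases eq_or_ne i b with rfl | hib
      · rw [Equiv.swap_apply_right]; exact hvab
      · rw [Equiv.swap_apply_of_ne_of_ne hia hib]
    have key : ∑ h : Fin j → Fin m, c h * ∏ i, v i (h i)
        = -∑ h : Fin j → Fin m, c h * ∏ i, v i (h i) := by
      nth_rewrite 1 [← Equiv.sum_comp (Equiv.arrowCongr (Equiv.swap a b) (Equiv.refl (Fin m)))
        (fun h : Fin j → Fin m => c h * ∏ i, v i (h i))]
      rw [← Finset.sum_neg_distrib]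
      refine Finset.sum_congr rfl fun h _ => ?_
      have he : (Equiv.arrowCongr (Equiv.swap a b) (Equiv.refl (Fin m))) h
          = h ∘ Equiv.swap a b := by
        funext i; simp [Equiv.arrowCongr]
      rw [he, hsw h a b hab]
      have hprod : ∏ i, v i ((h ∘ Equiv.swap a b) i) = ∏ i, v i (h i) := by
        have := Equiv.prod_comp (Equiv.swap a b) (fun i => v (Equiv.swap a b i) (h i))
        calc ∏ i, v i ((h ∘ Equiv.swap a b) i)
            = ∏ i, v (Equiv.swap a b (Equiv.swap a b i)) (h (Equiv.swap a b i)) := by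
              refine Finset.prod_congr rfl fun i _ => ?_
              rw [Equiv.swap_apply_self]
              rfl
          _ = ∏ i, v (Equiv.swap a b i) (h i) := this
          _ = ∏ i, v i (h i) := Finset.prod_congr rfl fun i _ => by rw [hv' i]
      rw [hprod]
      ring
    linarith

lemma mkAlt_apply {j : ℕ} (c : (Fin j → Fin m) → ℝ) (hsw) (v : Fin j → Vec m) :
    mkAlt m j c hsw v = ∑ h : Fin j → Fin m, c h * ∏ i, v i (h i) := by
  show (∑ h : Fin j → Fin m, c h • basisML m h) v = _
  rw [MultilinearMap.sum_apply]
  exact Finset.sum_congr rfl fun h _ => by rw [MultilinearMap.smul_apply, basisML_apply, smul_eq_mul]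

end AltTool


section FormTool
open MvPolynomial
variable {m k : ℕ}

lemma reflLin_apply (i : Fin m) (v : Vec m) : reflLin m i v = reflFun m i v := by
  funext j
  show (if j = i then -LinearMap.proj j else LinearMap.proj j : Vec m →ₗ[ℝ] ℝ) v = _
  rw [apply_ite (fun L : Vec m →ₗ[ℝ] ℝ => L v)]
  rfl

lemma reflFun_invol (i : Fin m) (x : Vec m) : reflFun m i (reflFun m i x) = x := by
  funext j; unfold reflFun; split_ifs <;> ring

lemma reflFun_comm (i i' : Fin m) (x : Vec m) :
    reflFun m i (reflFun m i' x) = reflFun m i' (reflFun m i x) := by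
  funext j; unfold reflFun; split_ifs <;> ring

lemma dPhi_apply (u w : Vec m) (j : Fin m) : dPhi m u w j = 2 * u j * w j := by
  show ((2 * u j) • LinearMap.proj j : Vec m →ₗ[ℝ] ℝ) w = _
  simp [mul_assoc]

lemma iU_apply (β : Form m (k + 1)) (x : Vec m) (v : Fin k → Vec m) :
    iU β x v = β x (Fin.cons x v) := rfl

lemma phiPull_apply (α : Form m k) (u : Vec m) (v : Fin k → Vec m) :
    phiPull m k α u v = α (Phi m u) (fun i => dPhi m u (v i)) := rfl

lemma reflPull_apply (i : Fin m) (α : Form m k) (x : Vec m) (v : Fin k → Vec m) :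
    reflPull m k i α x v = α (reflFun m i x) (fun l => reflFun m i (v l)) := by
  show α (reflFun m i x) (fun l => reflLin m i (v l)) = _
  simp_rw [reflLin_apply]

lemma phiPull_add' (a b : Form m k) :
    phiPull m k (a + b) = phiPull m k a + phiPull m k b := by
  funext u; ext v
  simp [phiPull_apply, Pi.add_apply]

lemma phiPull_smul' (c : ℝ) (a : Form m k) :
    phiPull m k (c • a) = c • phiPull m k a := by
  funext u; ext v
  simp [phiPull_apply, Pi.smul_apply]

lemma reflPull_add (i : Fin m) (a b : Form m k) :
    reflPull m k i (a + b) = reflPull m k i a + reflPull m k i b := by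
  funext u; ext v
  simp [reflPull_apply, Pi.add_apply]

lemma reflPull_smul (i : Fin m) (c : ℝ) (a : Form m k) :
    reflPull m k i (c • a) = c • reflPull m k i a := by
  funext u; ext v
  simp [reflPull_apply, Pi.smul_apply]

lemma iU_add (a b : Form m (k + 1)) : iU (a + b) = iU a + iU b := by
  funext u; ext v
  simp [iU_apply, Pi.add_apply]

lemma iU_smul (c : ℝ) (a : Form m (k + 1)) : iU (c • a) = c • iU a := by
  funext u; ext v
  simp [iU_apply, Pi.smul_apply]

lemma reflPull_reflPull_same (i : Fin m) (a : Form m k) :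
    reflPull m k i (reflPull m k i a) = a := by
  funext x; ext v
  rw [reflPull_apply, reflPull_apply, reflFun_invol]
  congr 1
  funext l
  rw [reflFun_invol]

lemma reflPull_comm (i i' : Fin m) (a : Form m k) :
    reflPull m k i (reflPull m k i' a) = reflPull m k i' (reflPull m k i a) := by
  funext x; ext v
  rw [reflPull_apply, reflPull_apply, reflPull_apply, reflPull_apply, reflFun_comm]
  congr 1
  funext l
  rw [reflFun_comm]

lemma iU_reflPull (i : Fin m) (γ : Form m (k + 1)) :
    iU (reflPull m (k + 1) i γ) = reflPull m k i (iU γ) := by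
  funext x; ext v
  rw [iU_apply, reflPull_apply, reflPull_apply, iU_apply]
  congr 1
  funext l
  refine Fin.cases ?_ ?_ l
  · simp
  · intro l'; simp

lemma Phi_reflFun (i : Fin m) (u : Vec m) : Phi m (reflFun m i u) = Phi m u := by
  funext j; unfold Phi reflFun; split_ifs <;> ring

lemma phiPull_even (α : Form m k) (i : Fin m) :
    reflPull m k i (phiPull m k α) = phiPull m k α := by
  funext x; ext v
  rw [reflPull_apply, phiPull_apply, phiPull_apply, Phi_reflFun]
  congr 1
  funext l
  funext j
  rw [dPhi_apply, dPhi_apply]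
  unfold reflFun
  split_ifs <;> ring

lemma iU_phiPull (γ : Form m (k + 1)) :
    iU (phiPull m (k + 1) γ) = (2 : ℝ) • phiPull m k (iU γ) := by
  funext u; ext v
  rw [iU_apply, phiPull_apply]
  have hcons : (fun l => dPhi m u ((Fin.cons u v : Fin (k+1) → Vec m) l))
      = (Fin.cons (dPhi m u u) (fun i => dPhi m u (v i)) : Fin (k+1) → Vec m) := by
    funext l
    refine Fin.cases ?_ ?_ l
    · simp
    · intro l'; simp
  rw [hcons]
  have huu : dPhi m u u = (2 : ℝ) • Phi m u := by
    funext j; rw [dPhi_apply]; unfold Phi; simp; ring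
  rw [huu]
  have hsm := (γ (Phi m u)).toMultilinearMap.map_update_smul
    (Fin.cons (Phi m u) (fun i => dPhi m u (v i))) 0 (2 : ℝ) (Phi m u)
  rw [Fin.update_cons_zero, Fin.update_cons_zero] at hsm
  have hsm' : (γ (Phi m u)) (Fin.cons ((2:ℝ) • Phi m u) fun i => dPhi m u (v i))
      = (2:ℝ) • (γ (Phi m u)) (Fin.cons (Phi m u) fun i => dPhi m u (v i)) := hsm
  rw [hsm']
  simp [Pi.smul_apply, iU_apply, phiPull_apply]

end FormTool


section PLTool
open MvPolynomial
variable {m k : ℕ}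

lemma degLE_add {r : ℤ} {p q : MvPolynomial (Fin m) ℝ} (hp : degLE r p) (hq : degLE r q) :
    degLE r (p + q) := by
  classical
  intro d hd
  rcases Finset.mem_union.1 (MvPolynomial.support_add hd) with h | h
  · exact hp d h
  · exact hq d h

lemma degLE_flipPoly {r : ℤ} {i : Fin m} {p : MvPolynomial (Fin m) ℝ} (hp : degLE r p) :
    degLE r (flipPoly i p) := by
  refine degLE_sum fun d hd => degLE_monomial ?_
  exact degLE_iff.1 hp d hd

lemma PL_add {r : ℤ} {a b : Form m k} (ha : a ∈ PL m k r) (hb : b ∈ PL m k r) :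
    a + b ∈ PL m k r := by
  intro v
  obtain ⟨p, hp, hpe⟩ := ha v
  obtain ⟨q, hq, hqe⟩ := hb v
  refine ⟨p + q, degLE_add hp hq, fun x => ?_⟩
  have : (a + b) x v = a x v + b x v := rfl
  rw [this, hpe x, hqe x, map_add]

lemma PL_smul {r : ℤ} (c : ℝ) {a : Form m k} (ha : a ∈ PL m k r) : c • a ∈ PL m k r := by
  intro v
  obtain ⟨p, hp, hpe⟩ := ha v
  refine ⟨C c * p, degLE_C_mul hp, fun x => ?_⟩
  have : (c • a) x v = c * a x v := rfl
  rw [this, hpe x, eval_mul, eval_C]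

lemma PL_reflPull {r : ℤ} (i : Fin m) {a : Form m k} (ha : a ∈ PL m k r) :
    reflPull m k i a ∈ PL m k r := by
  intro v
  obtain ⟨p, hp, hpe⟩ := ha (fun l => reflLin m i (v l))
  refine ⟨flipPoly i p, degLE_flipPoly hp, fun x => ?_⟩
  have : reflPull m k i a x v = a (reflFun m i x) (fun l => reflLin m i (v l)) := rfl
  rw [this, hpe (reflFun m i x), eval_flipPoly]

lemma PLm_sub_PL {r : ℤ} : PLm m k r ⊆ PL m k r := by
  rintro α ⟨β, hβ, rfl⟩
  intro v
  have hpg := fun g : Fin (k+1) → Fin m =>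
    Classical.choose_spec (hβ (fun l => (Pi.single (g l) 1 : Vec m)))
  set pg : (Fin (k+1) → Fin m) → MvPolynomial (Fin m) ℝ := fun g =>
    Classical.choose (hβ (fun l => (Pi.single (g l) 1 : Vec m))) with hpgdef
  refine ⟨∑ g : Fin (k+1) → Fin m, C (∏ i : Fin k, v i (g i.succ)) * (X (g 0) * pg g), ?_, ?_⟩
  · refine degLE_sum fun g _ => degLE_C_mul ?_
    have := degLE_mul (degLE_X (i := g 0)) (hpg g).1
    rwa [show (1 : ℤ) + (r - 1) = r by ring] at this
  · intro x
    rw [iU_apply, alt_expand (β x) (Fin.cons x v), map_sum]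
    refine Finset.sum_congr rfl fun g _ => ?_
    rw [Fin.prod_univ_succ]
    rw [show ((Fin.cons x v : Fin (k+1) → Vec m) 0) (g 0) = x (g 0) from rfl]
    have hsucc : ∀ i : Fin k, ((Fin.cons x v : Fin (k+1) → Vec m) i.succ) (g i.succ)
        = v i (g i.succ) := fun i => rfl
    simp_rw [hsucc]
    rw [(hpg g).2 x, eval_mul, eval_mul, eval_C, eval_X]
    show (x (g 0) * ∏ i : Fin k, v i (g i.succ)) * eval x (pg g) = _
    ring

lemma eval_sq_phi (p : MvPolynomial (Fin m) ℝ) (u : Vec m) :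
    eval u (sqPoly p) = eval (Phi m u) p := eval_sqPoly p u

lemma phiPull_PL {s : ℤ} {α : Form m k} (hα : α ∈ PL m k s) :
    phiPull m k α ∈ PL m k (2 * s + k) := by
  intro v
  have hpg := fun g : Fin k → Fin m =>
    Classical.choose_spec (hα (fun l => (Pi.single (g l) 1 : Vec m)))
  set pg : (Fin k → Fin m) → MvPolynomial (Fin m) ℝ := fun g =>
    Classical.choose (hα (fun l => (Pi.single (g l) 1 : Vec m))) with hpgdef
  refine ⟨∑ g : Fin k → Fin m,
      C (∏ i, 2 * v i (g i)) * ((∏ i, (X (g i) : MvPolynomial (Fin m) ℝ)) * sqPoly (pg g)),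
      ?_, ?_⟩
  · refine degLE_sum fun g _ => degLE_C_mul ?_
    have := degLE_mul (degLE_prod_X g) (degLE_sqPoly (hpg g).1)
    rwa [show (k : ℤ) + 2 * s = 2 * s + k by ring] at this
  · intro u
    rw [phiPull_apply, alt_expand (α (Phi m u)) (fun i => dPhi m u (v i)), map_sum]
    refine Finset.sum_congr rfl fun g _ => ?_
    have hfac : ∀ i : Fin k, dPhi m u (v i) (g i) = (2 * v i (g i)) * u (g i) := by
      intro i; rw [dPhi_apply]; ring
    rw [Finset.prod_congr rfl fun i _ => hfac i, Finset.prod_mul_distrib]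
    rw [(hpg g).2 (Phi m u), eval_mul, eval_mul, eval_C, map_prod, eval_sq_phi]
    simp only [eval_X, smul_eq_mul]
    ring

lemma phiPull_injective {r r' : ℤ} {α α' : Form m k} (hα : α ∈ PL m k r)
    (hα' : α' ∈ PL m k r') (h : phiPull m k α = phiPull m k α') : α = α' := by
  have hsingle : ∀ (u : Vec m) (g : Fin k → Fin m) (l : Fin k),
      dPhi m u ((Pi.single (g l) 1 : Vec m)) = (2 * u (g l)) • (Pi.single (g l) 1 : Vec m) := by
    intro u g l
    funext j
    rw [dPhi_apply, Pi.smul_apply, Pi.single_apply, smul_eq_mul]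
    split_ifs with hj
    · subst hj; ring
    · ring
  have main : ∀ (β : Form m k) (rr : ℤ), β ∈ PL m k rr → ∀ (g : Fin k → Fin m)
      (p : MvPolynomial (Fin m) ℝ),
      (∀ x, β x (fun l => (Pi.single (g l) 1 : Vec m)) = eval x p) →
      ∀ u, eval u (C ((2:ℝ)^k) * ((∏ i, (X (g i) : MvPolynomial (Fin m) ℝ)) * sqPoly p))
        = phiPull m k β u (fun l => (Pi.single (g l) 1 : Vec m)) := by
    intro β rr _ g p hpe u
    rw [phiPull_apply]
    rw [show (fun l => dPhi m u ((Pi.single (g l) 1 : Vec m)))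
        = fun l => (2 * u (g l)) • (Pi.single (g l) 1 : Vec m) from funext (hsingle u g)]
    have hms : (β (Phi m u)) (fun l => (2 * u (g l)) • (Pi.single (g l) 1 : Vec m))
        = (∏ l, 2 * u (g l)) • (β (Phi m u)) (fun l => (Pi.single (g l) 1 : Vec m)) :=
      (β (Phi m u)).toMultilinearMap.map_smul_univ _ _
    rw [hms, hpe (Phi m u), eval_mul, eval_mul, eval_C, map_prod, eval_sq_phi]
    simp only [eval_X, smul_eq_mul]
    rw [Finset.prod_mul_distrib, Finset.prod_const]
    simp only [Finset.card_univ, Fintype.card_fin]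
    ring
  have key : ∀ (g : Fin k → Fin m) (x : Vec m),
      α x (fun l => (Pi.single (g l) 1 : Vec m)) = α' x (fun l => (Pi.single (g l) 1 : Vec m)) := by
    intro g
    obtain ⟨p, hp, hpe⟩ := hα (fun l => (Pi.single (g l) 1 : Vec m))
    obtain ⟨p', hp', hpe'⟩ := hα' (fun l => (Pi.single (g l) 1 : Vec m))
    suffices hpp : p = p' by intro x; rw [hpe x, hpe' x, hpp]
    have hQ := main α r hα g p hpe
    have hQ' := main α' r' hα' g p' hpe'
    have heq : ∀ u : Vec m,
        eval u (C ((2:ℝ)^k) * ((∏ i, (X (g i) : MvPolynomial (Fin m) ℝ)) * sqPoly p))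
        = eval u (C ((2:ℝ)^k) * ((∏ i, (X (g i) : MvPolynomial (Fin m) ℝ)) * sqPoly p')) := by
      intro u
      rw [hQ u, hQ' u, h]
    have hQQ := MvPolynomial.funext heq
    have h2 : (C ((2:ℝ)^k) : MvPolynomial (Fin m) ℝ) ≠ 0 := by
      rw [Ne, MvPolynomial.C_eq_zero]
      positivity
    have hX : (∏ i : Fin k, (X (g i) : MvPolynomial (Fin m) ℝ)) ≠ 0 :=
      Finset.prod_ne_zero_iff.2 fun i _ => MvPolynomial.X_ne_zero _
    exact sqPoly_inj (mul_left_cancel₀ hX (mul_left_cancel₀ h2 hQQ))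
  funext x
  ext v
  rw [alt_expand (α x) v, alt_expand (α' x) v]
  exact Finset.sum_congr rfl fun g _ => by rw [key g x]

end PLTool


section Evenize
variable {m k : ℕ}

/-- One symmetrization step. -/
noncomputable def evenStep (i : Fin m) (γ : Form m k) : Form m k :=
  (2:ℝ)⁻¹ • (γ + reflPull m k i γ)

lemma reflPull_evenStep_self (i : Fin m) (γ : Form m k) :
    reflPull m k i (evenStep i γ) = evenStep i γ := by
  unfold evenStep
  rw [reflPull_smul, reflPull_add, reflPull_reflPull_same, add_comm]

lemma reflPull_evenStep (i jj : Fin m) (γ : Form m k) :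
    reflPull m k jj (evenStep i γ) = evenStep i (reflPull m k jj γ) := by
  unfold evenStep
  rw [reflPull_smul, reflPull_add, reflPull_comm]

lemma evenStep_PL {r : ℤ} (i : Fin m) {γ : Form m k} (hγ : γ ∈ PL m k r) :
    evenStep i γ ∈ PL m k r :=
  PL_smul _ (PL_add hγ (PL_reflPull i hγ))

lemma iU_evenStep (i : Fin m) (γ : Form m (k + 1)) :
    iU (evenStep i γ) = evenStep i (iU γ) := by
  unfold evenStep
  rw [iU_smul, iU_add, iU_reflPull]

lemma evenStep_fixed (i : Fin m) {γ : Form m k} (h : reflPull m k i γ = γ) :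
    evenStep i γ = γ := by
  unfold evenStep
  rw [h, ← two_smul ℝ γ, smul_smul]
  norm_num

noncomputable def evenizeL (l : List (Fin m)) (γ : Form m k) : Form m k :=
  l.foldr (fun i δ => evenStep i δ) γ

lemma evenizeL_cons (i : Fin m) (l : List (Fin m)) (γ : Form m k) :
    evenizeL (i :: l) γ = evenStep i (evenizeL l γ) := rfl

lemma reflPull_evenizeL (l : List (Fin m)) (jj : Fin m) (hjj : jj ∈ l) (γ : Form m k) :
    reflPull m k jj (evenizeL l γ) = evenizeL l γ := by
  induction l with
  | nil => simp at hjj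
  | cons i l ih =>
      rw [evenizeL_cons]
      rcases List.mem_cons.1 hjj with rfl | hmem
      · exact reflPull_evenStep_self _ _
      · rw [reflPull_evenStep, ih hmem]

lemma evenizeL_PL {r : ℤ} (l : List (Fin m)) {γ : Form m k} (hγ : γ ∈ PL m k r) :
    evenizeL l γ ∈ PL m k r := by
  induction l with
  | nil => exact hγ
  | cons i l ih => exact evenStep_PL i ih

lemma iU_evenizeL (l : List (Fin m)) (γ : Form m (k + 1)) :
    iU (evenizeL l γ) = evenizeL l (iU γ) := by
  induction l with
  | nil => rfl
  | cons i l ih => rw [evenizeL_cons, iU_evenStep, ih]; rfl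

lemma evenizeL_fixed (l : List (Fin m)) {γ : Form m k} (h : ∀ i, reflPull m k i γ = γ) :
    evenizeL l γ = γ := by
  induction l with
  | nil => rfl
  | cons i l ih => rw [evenizeL_cons, ih, evenStep_fixed i (h i)]

end Evenize


section EvenFactor
open MvPolynomial
variable {m : ℕ}

lemma reflFun_single (i a : Fin m) :
    reflFun m i (Pi.single a (1:ℝ)) = (if a = i then (-1:ℝ) else 1) • (Pi.single a 1 : Vec m) := by
  funext jj
  rw [Pi.smul_apply, smul_eq_mul]
  unfold reflFun
  simp only [Pi.single_apply]
  split_ifs <;> simp_all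

lemma even_factor {j t : ℕ} {γ : Form m j} (hγ : γ ∈ PL m j (2*(t:ℤ) + j))
    (hev : ∀ i, reflPull m j i γ = γ) :
    ∃ δ ∈ PL m j (t:ℤ), phiPull m j δ = γ := by
  classical
  have hP := fun h : Fin j → Fin m =>
    Classical.choose_spec (hγ (fun l => (Pi.single (h l) 1 : Vec m)))
  set P : (Fin j → Fin m) → MvPolynomial (Fin m) ℝ := fun h =>
    Classical.choose (hγ (fun l => (Pi.single (h l) 1 : Vec m))) with hPdef
  have hswap : ∀ (h : Fin j → Fin m) (a b : Fin j), a ≠ b →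
      P (h ∘ Equiv.swap a b) = - P h := by
    intro h a b hab
    apply MvPolynomial.funext
    intro x
    rw [← (hP (h ∘ Equiv.swap a b)).2 x]
    have h1 : (fun l => (Pi.single ((h ∘ Equiv.swap a b) l) 1 : Vec m))
        = (fun l => (Pi.single (h l) 1 : Vec m)) ∘ (Equiv.swap a b) := rfl
    rw [h1, AlternatingMap.map_swap _ _ hab, (hP h).2 x, map_neg]
  have hzero : ∀ h : Fin j → Fin m, ¬ Function.Injective h → P h = 0 := by
    intro h hinj
    apply MvPolynomial.funext; intro x
    rw [← (hP h).2 x, map_zero]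
    obtain ⟨a, b, hab, hne⟩ := Function.not_injective_iff.1 hinj
    exact AlternatingMap.map_eq_zero_of_eq _ _
      (show (Pi.single (h a) 1 : Vec m) = Pi.single (h b) 1 by rw [hab]) hne
  have hparity : ∀ (h : Fin j → Fin m), Function.Injective h →
      ∀ d ∈ (P h).support, ∀ i : Fin m,
      if i ∈ Finset.image h Finset.univ then Odd (d i) else Even (d i) := by
    intro h hinj d hd i
    set ε : ℝ := if i ∈ Finset.image h Finset.univ then -1 else 1 with hε
    have hprodsign : (∏ l : Fin j, if h l = i then (-1:ℝ) else 1) = ε := by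
      rw [hε]
      by_cases him : i ∈ Finset.image h Finset.univ
      · rw [if_pos him]
        obtain ⟨l₀, _, hl₀⟩ := Finset.mem_image.1 him
        rw [Finset.prod_eq_single l₀]
        · rw [if_pos hl₀]
        · intro l _ hne
          rw [if_neg]
          intro hc
          exact hne (hinj (hc.trans hl₀.symm))
        · intro habs; exact absurd (Finset.mem_univ l₀) habs
      · rw [if_neg him, Finset.prod_eq_one]
        intro l _
        rw [if_neg]
        intro hc
        exact him (Finset.mem_image.2 ⟨l, Finset.mem_univ l, hc⟩)
    have hfun : ∀ x : Vec m, eval x (P h) = ε * eval x (flipPoly i (P h)) := by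
      intro x
      rw [eval_flipPoly, ← (hP h).2 x, ← (hP h).2 (reflFun m i x)]
      conv_lhs => rw [← hev i]
      rw [reflPull_apply]
      have h2 : (fun l => reflFun m i ((Pi.single (h l) 1 : Vec m)))
          = fun l => (if h l = i then (-1:ℝ) else 1) • (Pi.single (h l) 1 : Vec m) := by
        funext l; rw [reflFun_single]
      rw [h2]
      have h3 : (γ (reflFun m i x)) (fun l => (if h l = i then (-1:ℝ) else 1)
            • (Pi.single (h l) 1 : Vec m))
          = (∏ l : Fin j, if h l = i then (-1:ℝ) else 1)
            • (γ (reflFun m i x)) (fun l => (Pi.single (h l) 1 : Vec m)) :=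
        (γ (reflFun m i x)).toMultilinearMap.map_smul_univ _ _
      rw [h3, hprodsign, smul_eq_mul]
    have hpoly : P h = C ε * flipPoly i (P h) :=
      MvPolynomial.funext (fun x => by rw [hfun x, eval_mul, eval_C])
    have hc : coeff d (P h) ≠ 0 := mem_support_iff.1 hd
    have hkey : coeff d (P h) = ε * ((-1)^(d i) * coeff d (P h)) := by
      conv_lhs => rw [hpoly]
      rw [coeff_C_mul, coeff_flipPoly]
    by_cases him : i ∈ Finset.image h Finset.univ
    · rw [if_pos him]
      rw [hε, if_pos him] at hkey
      rcases Nat.even_or_odd (d i) with he | ho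
      · exfalso
        rw [he.neg_one_pow] at hkey
        apply hc
        linarith
      · exact ho
    · rw [if_neg him]
      rw [hε, if_neg him] at hkey
      rcases Nat.even_or_odd (d i) with he | ho
      · exact he
      · exfalso
        rw [ho.neg_one_pow] at hkey
        apply hc
        linarith
  have hWswap : ∀ (h : Fin j → Fin m) (a b : Fin j), a ≠ b →
      halfPoly (P (h ∘ Equiv.swap a b)) = - halfPoly (P h) := by
    intro h a b hab; rw [hswap h a b hab, halfPoly_neg]
  set cfun : Vec m → (Fin j → Fin m) → ℝ :=
    fun x h => ((2:ℝ)^j)⁻¹ * eval x (halfPoly (P h)) with hcfun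
  have hsw : ∀ (x : Vec m) (h : Fin j → Fin m) (a b : Fin j), a ≠ b →
      cfun x (h ∘ Equiv.swap a b) = - cfun x h := by
    intro x h a b hab
    show ((2:ℝ)^j)⁻¹ * eval x (halfPoly (P (h ∘ Equiv.swap a b)))
        = -(((2:ℝ)^j)⁻¹ * eval x (halfPoly (P h)))
    rw [hWswap h a b hab, map_neg]
    ring
  set δ : Form m j := fun x => mkAlt m j (cfun x) (hsw x) with hδ
  have hδapply : ∀ (x : Vec m) (v : Fin j → Vec m),
      δ x v = ∑ h : Fin j → Fin m, cfun x h * ∏ i, v i (h i) := by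
    intro x v; rw [hδ]; exact mkAlt_apply _ _ v
  have hfactor : ∀ (h : Fin j → Fin m) (u : Vec m),
      eval u (P h) = (∏ i : Fin j, u (h i)) * eval (Phi m u) (halfPoly (P h)) := by
    intro h u
    by_cases hinj : Function.Injective h
    · have := eval_halfPoly (Finset.image h Finset.univ) (hparity h hinj) u
      rw [this]
      congr 1
      exact Finset.prod_image (fun a _ b _ hab => hinj hab)
    · rw [hzero h hinj, halfPoly_zero, map_zero, map_zero, mul_zero]
  refine ⟨δ, ?_, ?_⟩
  · intro v
    refine ⟨∑ h : Fin j → Fin m,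
        C (((2:ℝ)^j)⁻¹ * ∏ i, v i (h i)) * halfPoly (P h), ?_, ?_⟩
    · refine degLE_sum fun h _ => degLE_C_mul ?_
      by_cases hinj : Function.Injective h
      · refine degLE_halfPoly (Finset.image h Finset.univ) ?_ (hparity h hinj) (hP h).1
        rw [Finset.card_image_of_injective _ hinj, Finset.card_univ, Fintype.card_fin]
      · rw [hzero h hinj, halfPoly_zero]
        exact degLE_zero (by positivity)
    · intro x
      rw [hδapply x v, map_sum]
      refine Finset.sum_congr rfl fun h _ => ?_
      rw [eval_mul, eval_C]
      show ((2:ℝ)^j)⁻¹ * eval x (halfPoly (P h)) * ∏ i, v i (h i) = _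
      ring
  · funext u
    ext v
    rw [phiPull_apply, hδapply (Phi m u) (fun i => dPhi m u (v i)),
      alt_expand (γ u) v]
    refine Finset.sum_congr rfl fun h _ => ?_
    rw [(hP h).2 u, hfactor h u]
    have hfac : ∀ i : Fin j, dPhi m u (v i) (h i) = 2 * (u (h i) * v i (h i)) := by
      intro i; rw [dPhi_apply]; ring
    rw [Finset.prod_congr rfl fun i _ => hfac i, Finset.prod_mul_distrib,
      Finset.prod_mul_distrib, Finset.prod_const]
    simp only [Finset.card_univ, Fintype.card_fin, smul_eq_mul]
    show ((2:ℝ)^j)⁻¹ * eval (Phi m u) (halfPoly (P h)) * ((2:ℝ)^j * ((∏ i, u (h i)) * ∏ i, v i (h i)))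
        = (∏ i, v i (h i)) * ((∏ i, u (h i)) * eval (Phi m u) (halfPoly (P h)))
    have h2j : ((2:ℝ)^j) ≠ 0 := by positivity
    field_simp

end EvenFactor

theorem stmt8 (n k r : ℕ) (hk : k ≤ n + 1) (hr : 1 ≤ r) :
    Set.BijOn (phiPull (n + 1) k) (PLm (n + 1) k (r : ℤ))
      {α ∈ PLm (n + 1) k (2 * (r : ℤ) + k) | IsEven (n + 1) k α} ∧
    (∀ a b, phiPull (n + 1) k (a + b) = phiPull (n + 1) k a + phiPull (n + 1) k b) ∧
    (∀ (c : ℝ) a, phiPull (n + 1) k (c • a) = c • phiPull (n + 1) k a) := by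
  refine ⟨⟨?_, ?_, ?_⟩, phiPull_add', phiPull_smul'⟩
  · -- MapsTo
    rintro α ⟨β₀, hβ₀, rfl⟩
    refine ⟨⟨(2:ℝ)⁻¹ • phiPull (n+1) (k+1) β₀, ?_, ?_⟩, fun i => phiPull_even _ i⟩
    · apply PL_smul
      have h1 := phiPull_PL (s := (r:ℤ) - 1) hβ₀
      have he : 2*((r:ℤ)-1) + ((k+1 : ℕ) : ℤ) = 2*(r:ℤ) + (k:ℤ) - 1 := by push_cast; ring
      rwa [he] at h1
    · rw [iU_smul, iU_phiPull, smul_smul]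
      norm_num
  · -- InjOn
    intro α hα α' hα' h
    exact phiPull_injective (PLm_sub_PL hα) (PLm_sub_PL hα') h
  · -- SurjOn
    rintro α ⟨⟨γ, hγPL, hγeq⟩, hev⟩
    set γ' := evenizeL (List.finRange (n+1)) γ with hγ'
    have hγ'PL : γ' ∈ PL (n+1) (k+1) (2*(r:ℤ) + (k:ℤ) - 1) := evenizeL_PL _ hγPL
    have hγ'even : ∀ i, reflPull (n+1) (k+1) i γ' = γ' :=
      fun i => reflPull_evenizeL _ i (List.mem_finRange i) γ
    have hiU : iU γ' = α := by
      rw [hγ', iU_evenizeL, hγeq]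
      exact evenizeL_fixed _ hev
    have hdeg : (2*(((r-1:ℕ)):ℤ) + ((k+1 : ℕ) : ℤ)) = 2*(r:ℤ) + (k:ℤ) - 1 := by
      have : ((r-1:ℕ):ℤ) = (r:ℤ) - 1 := by omega
      rw [this]; push_cast; ring
    have hγ'PL2 : γ' ∈ PL (n+1) (k+1) (2*(((r-1:ℕ)):ℤ) + ((k+1 : ℕ) : ℤ)) := by
      rw [hdeg]; exact hγ'PL
    obtain ⟨δ, hδPL, hδeq⟩ := even_factor (t := r - 1) hγ'PL2 hγ'even
    refine ⟨iU ((2:ℝ) • δ), ⟨(2:ℝ) • δ, ?_, rfl⟩, ?_⟩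
    · apply PL_smul
      have hcast : ((r-1:ℕ):ℤ) = (r:ℤ) - 1 := by omega
      rwa [hcast] at hδPL
    · have h1 := iU_phiPull (m := n+1) (k := k) ((2:ℝ) • δ)
      have h2 : phiPull (n+1) k (iU ((2:ℝ)•δ))
          = (2:ℝ)⁻¹ • iU (phiPull (n+1) (k+1) ((2:ℝ)•δ)) := by
        rw [h1, smul_smul]
        norm_num
      rw [h2, phiPull_smul', hδeq, iU_smul, smul_smul]
      norm_num
      exact hiU


end
end
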